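/- arXiv:2408.11543 — 6 statements merged into one kernel-verified Lean document; each statement's English description precedes it below -/
import Mathlib

section
/- Let G be a finitely generated infinite group, let H ≤ G be a subgroup of finite index, let d be a Banach metric on G, and let d_H be the restriction of d to H × H. Then d_H is a Banach metric on H. -/
open Filter Topology

section Defs

variable {G : Type*}

/-- `d` is a metric on `X` (nonnegative, vanishing exactly on the diagonal,
symmetric, triangle inequality). -/
def IsMetric {X : Type*} (d : X → X → ℝ) : Prop :=
  (∀ x y, 0 ≤ d x y) ∧ (∀ x y, d x y = 0 ↔ x = y) ∧ (∀ x y, d x y = d y x) ∧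
    (∀ x y z, d x z ≤ d x y + d y z)

/-- The Busemann function of `x` with base point `1`: `b_x(y) = d(x,y) - d(x,1)`. -/
def bus [Group G] (d : G → G → ℝ) (x y : G) : ℝ := d x y - d x 1

/-- `h` belongs to the metric-functional boundary `∂(G,d)`: it is a pointwise
limit of Busemann functions and is not itself a Busemann function. -/
def InBoundary [Group G] (d : G → G → ℝ) (h : G → ℝ) : Prop :=
  (∃ u : ℕ → G, ∀ y : G, Tendsto (fun n => bus d (u n) y) atTop (𝓝 (h y))) ∧
    ∀ x : G, h ≠ bus d x

/-- The action of `x ∈ G` on functions: `(x.h)(y) = h(x⁻¹y) - h(x⁻¹)`. -/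
def act [Group G] (x : G) (h : G → ℝ) : G → ℝ := fun y => h (x⁻¹ * y) - h x⁻¹

/-- `S` is a finite symmetric generating set of `G`. -/
def FinSymGen [Group G] (S : Set G) : Prop :=
  S.Finite ∧ (∀ s ∈ S, s⁻¹ ∈ S) ∧ Subgroup.closure S = ⊤

/-- The word length of `x` with respect to `S`: the least `n` such that `x`
is a product of `n` elements of `S`. -/
noncomputable def wordLength [Group G] (S : Set G) (x : G) : ℕ :=
  sInf {n : ℕ | ∃ l : List G, (∀ s ∈ l, s ∈ S) ∧ l.length = n ∧ l.prod = x}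

/-- The word metric with respect to `S` : `d_S(x,y) = |x⁻¹y|_S`. -/
noncomputable def wordDist [Group G] (S : Set G) (x y : G) : ℝ :=
  (wordLength S (x⁻¹ * y) : ℝ)

/-- `(G,d)` is quasi-isometric to a Cayley graph of `G`. -/
def QIToCayley [Group G] (d : G → G → ℝ) : Prop :=
  ∃ S : Set G, FinSymGen S ∧ ∃ φ : G → G, ∃ C : ℝ, 0 < C ∧
    (∀ y : G, ∃ x : G, wordDist S (φ x) y ≤ C) ∧
    ∀ x y : G, C⁻¹ * d x y - C ≤ wordDist S (φ x) (φ y) ∧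
      wordDist S (φ x) (φ y) ≤ C * d x y + C

/-- A Banach metric on `G`: an integer-valued, left-invariant, proper metric,
quasi-isometric to a Cayley graph, all of whose metric functionals are unbounded. -/
def IsBanachMetric [Group G] (d : G → G → ℝ) : Prop :=
  IsMetric d ∧
  (∀ x y : G, ∃ n : ℕ, d x y = n) ∧
  (∀ x y z : G, d (z * x) (z * y) = d x y) ∧
  (∀ r : ℝ, {x : G | d x 1 ≤ r}.Finite) ∧
  QIToCayley d ∧
  ∀ h : G → ℝ, InBoundary d h → ¬ ∃ B : ℝ, ∀ x : G, |h x| ≤ B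

/-- A virtual homomorphism on `G`: a function `φ : G → ℤ` restricting to a
nontrivial homomorphism on some finite index subgroup. -/
def IsVirtualHom [Group G] (φ : G → ℤ) : Prop :=
  ∃ H : Subgroup G, H.FiniteIndex ∧
    (∀ a b : G, a ∈ H → b ∈ H → φ (a * b) = φ a + φ b) ∧
    ∃ a ∈ H, φ a ≠ 0

end Defs


namespace BanachAux
variable {G : Type*} [Group G]

lemma wordLength_le {S : Set G} {x : G} {l : List G} (hl : ∀ s ∈ l, s ∈ S) (hp : l.prod = x) :
    wordLength S x ≤ l.length := Nat.sInf_le ⟨l, hl, rfl, hp⟩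

lemma exists_word {S : Set G} (hsym : ∀ s ∈ S, s⁻¹ ∈ S) (hgen : Subgroup.closure S = ⊤) (x : G) :
    ∃ l : List G, (∀ s ∈ l, s ∈ S) ∧ l.prod = x := by
  have hx : x ∈ Subgroup.closure S := hgen ▸ Subgroup.mem_top x
  induction hx using Subgroup.closure_induction with
  | mem s hs => exact ⟨[s], by simpa using hs, by simp⟩
  | one => exact ⟨[], by simp, by simp⟩
  | mul a b _ _ iha ihb =>
    obtain ⟨la, hla, hpa⟩ := iha
    obtain ⟨lb, hlb, hpb⟩ := ihb
    refine ⟨la ++ lb, ?_, by simp [hpa, hpb]⟩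
    intro s hs
    rcases List.mem_append.mp hs with h | h
    exacts [hla s h, hlb s h]
  | inv a _ iha =>
    obtain ⟨la, hla, hpa⟩ := iha
    refine ⟨(la.map fun y => y⁻¹).reverse, ?_, by rw [← List.prod_inv_reverse, hpa]⟩
    intro s hs
    simp only [List.mem_reverse, List.mem_map] at hs
    obtain ⟨t, ht, rfl⟩ := hs
    exact hsym t (hla t ht)

lemma exists_min_word {S : Set G} (hsym : ∀ s ∈ S, s⁻¹ ∈ S) (hgen : Subgroup.closure S = ⊤)
    (x : G) : ∃ l : List G, (∀ s ∈ l, s ∈ S) ∧ l.prod = x ∧ l.length = wordLength S x := by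
  obtain ⟨l, hl, hp⟩ := exists_word hsym hgen x
  have hne : {n : ℕ | ∃ l : List G, (∀ s ∈ l, s ∈ S) ∧ l.length = n ∧ l.prod = x}.Nonempty :=
    ⟨l.length, l, hl, rfl, hp⟩
  obtain ⟨l0, hl0, hlen, hp0⟩ := Nat.sInf_mem hne
  exact ⟨l0, hl0, hp0, hlen⟩

lemma wordLength_mul_le {S : Set G} (hsym : ∀ s ∈ S, s⁻¹ ∈ S)
    (hgen : Subgroup.closure S = ⊤) (x y : G) :
    wordLength S (x * y) ≤ wordLength S x + wordLength S y := by
  obtain ⟨lx, hlx, hpx, hnx⟩ := exists_min_word hsym hgen x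
  obtain ⟨ly, hly, hpy, hny⟩ := exists_min_word hsym hgen y
  have := wordLength_le (S := S) (x := x * y) (l := lx ++ ly)
    (by
      intro s hs
      rcases List.mem_append.mp hs with h | h
      exacts [hlx s h, hly s h])
    (by simp [hpx, hpy])
  simpa [hnx, hny] using this

lemma wordLength_inv_le {S : Set G} (hsym : ∀ s ∈ S, s⁻¹ ∈ S)
    (hgen : Subgroup.closure S = ⊤) (x : G) :
    wordLength S x⁻¹ ≤ wordLength S x := by
  obtain ⟨lx, hlx, hpx, hnx⟩ := exists_min_word hsym hgen x
  have := wordLength_le (S := S) (x := x⁻¹) (l := (lx.map fun y => y⁻¹).reverse)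
    (by
      intro s hs
      simp only [List.mem_reverse, List.mem_map] at hs
      obtain ⟨t, ht, rfl⟩ := hs
      exact hsym t (hlx t ht))
    (by rw [← List.prod_inv_reverse, hpx])
  simpa [hnx] using this

lemma wordDist_triangle {S : Set G} (hsym : ∀ s ∈ S, s⁻¹ ∈ S)
    (hgen : Subgroup.closure S = ⊤) (x y z : G) :
    wordDist S x z ≤ wordDist S x y + wordDist S y z := by
  have h : wordLength S (x⁻¹ * z) ≤ wordLength S (x⁻¹ * y) + wordLength S (y⁻¹ * z) := by
    have := wordLength_mul_le hsym hgen (x⁻¹ * y) (y⁻¹ * z)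
    simpa [mul_assoc] using this
  unfold wordDist
  exact_mod_cast h

lemma wordDist_symm {S : Set G} (hsym : ∀ s ∈ S, s⁻¹ ∈ S)
    (hgen : Subgroup.closure S = ⊤) (x y : G) :
    wordDist S x y = wordDist S y x := by
  have h1 := wordLength_inv_le hsym hgen (x⁻¹ * y)
  have h2 := wordLength_inv_le hsym hgen (y⁻¹ * x)
  simp only [mul_inv_rev, inv_inv] at h1 h2
  unfold wordDist
  have : wordLength S (x⁻¹ * y) = wordLength S (y⁻¹ * x) := le_antisymm h2 h1
  rw [this]

lemma prod_chain (e : ℕ → G) (m : ℕ) :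
    ((List.range m).map (fun j => (e j)⁻¹ * e (j+1))).prod = (e 0)⁻¹ * e m := by
  induction m with
  | zero => simp
  | succ m ih =>
    rw [List.range_succ, List.map_append, List.prod_append, ih]
    simp [mul_assoc]

end BanachAux

/-- The restriction of a Banach metric on `G` to a finite index
subgroup `H ≤ G` is a Banach metric on `H`. -/
theorem isBanachMetric_restrict_finiteIndex
    {G : Type*} [Group G] [Group.FG G] [Infinite G]
    (H : Subgroup G) (hH : H.FiniteIndex)
    (d : G → G → ℝ) (hd : IsBanachMetric d) :
    IsBanachMetric (fun x y : H => d (x : G) (y : G)) := by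
  classical
  obtain ⟨⟨dnn, dzero, dsymm, dtri⟩, dint, dinv, dprop,
    ⟨S, ⟨hSfin, hSsym, hSgen⟩, φ, C, hC, hsurj, hQI⟩, hbdry⟩ := hd
  haveI := hH
  open BanachAux in
  -- basic facts about d
  have dleft : ∀ x y : G, d x y = d (x⁻¹ * y) 1 := by
    intro x y
    have h1 := dinv x y x⁻¹
    simp only [inv_mul_cancel] at h1
    rw [← h1, dsymm]
  have done1 : d (1:G) 1 = 0 := (dzero 1 1).mpr rfl
  -- every element of G is within distance R of H
  haveI : Finite (G ⧸ H) := H.finite_quotient_of_finiteIndex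
  obtain ⟨R, hR0, hρ⟩ : ∃ R : ℝ, 0 ≤ R ∧ ∀ g : G, ∃ y : H, d g ↑y ≤ R := by
    obtain ⟨R, hR⟩ := (Set.finite_range fun q : G ⧸ H => d 1 q.out).bddAbove
    refine ⟨R, le_trans (dnn 1 (QuotientGroup.mk (1:G) : G ⧸ H).out) (hR ⟨_, rfl⟩), ?_⟩
    intro g
    set t := (QuotientGroup.mk (g⁻¹) : G ⧸ H).out with ht
    have hmem : g * t ∈ H := by
      have h1 : (QuotientGroup.mk (g⁻¹) : G ⧸ H) = QuotientGroup.mk t := (QuotientGroup.out_eq' _).symm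
      have h2 := QuotientGroup.eq.mp h1
      simpa using h2
    refine ⟨⟨g * t, hmem⟩, ?_⟩
    have h3 : d (g * 1) (g * t) = d 1 t := dinv 1 t g
    have h4 : d g (g * t) = d 1 t := by simpa using h3
    exact h4 ▸ hR ⟨_, rfl⟩
  choose ρ hρs using hρ
  -- the key chain lemma
  have key : ∃ K : ℝ, 1 ≤ K ∧ ∀ x : H, ∃ l : List H,
      (∀ s ∈ l, d (↑s : G) 1 ≤ K) ∧ l.prod = x ∧ (l.length : ℝ) ≤ K * d (↑x : G) 1 + K := by
    set K0 : ℝ := 2*R + 2*C^2 + C*(3*C+1) + 1 with hK0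
    have hK0nn : 0 ≤ K0 := by nlinarith
    refine ⟨max (max K0 (C+2)) 1, le_max_right _ _, ?_⟩
    set K : ℝ := max (max K0 (C+2)) 1 with hK
    have hK0le : K0 ≤ K := le_trans (le_max_left _ _) (le_max_left _ _)
    have hKC : C + 2 ≤ K := le_trans (le_max_right _ _) (le_max_left _ _)
    intro x
    obtain ⟨lG, hlG, hlGp, hlGlen⟩ := BanachAux.exists_min_word hSsym hSgen ((φ ↑x)⁻¹ * φ 1)
    set n := wordLength S ((φ (↑x : G))⁻¹ * φ 1) with hn
    set w : ℕ → G := fun i => φ ↑x * (lG.take i).prod with hw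
    have hw0 : w 0 = φ ↑x := by simp [hw]
    have hwn : w n = φ 1 := by
      simp only [hw, ← hlGlen, List.take_length, hlGp]
      group
    have hwstep : ∀ i < n, wordDist S (w i) (w (i+1)) ≤ 1 := by
      intro i hi
      have hilen : i < lG.length := by omega
      have hstep : (w i)⁻¹ * w (i+1) = lG.get ⟨i, hilen⟩ := by
        simp only [hw, List.prod_take_succ lG i hilen, mul_inv_rev]
        rw [List.get_eq_getElem]
        group
      have hmem : (w i)⁻¹ * w (i+1) ∈ S := hstep ▸ hlG _ (List.get_mem lG ⟨i, hilen⟩)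
      have h1 := BanachAux.wordLength_le (S := S) (x := (w i)⁻¹ * w (i+1))
        (l := [(w i)⁻¹ * w (i+1)]) (by simpa using hmem) (by simp)
      unfold wordDist
      exact_mod_cast h1
    have hd_low : ∀ a b : G, d a b ≤ C * (wordDist S (φ a) (φ b) + C) := by
      intro a b
      have h1 : C⁻¹ * d a b ≤ wordDist S (φ a) (φ b) + C := by linarith [(hQI a b).1]
      have h2 := mul_le_mul_of_nonneg_left h1 (le_of_lt hC)
      rwa [← mul_assoc, mul_inv_cancel₀ (ne_of_gt hC), one_mul] at h2
    choose z hz using hsurj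
    have hzstep : ∀ i < n, d (z (w i)) (z (w (i+1))) ≤ C * (3*C+1) := by
      intro i hi
      have t1 : wordDist S (φ (z (w i))) (φ (z (w (i+1)))) ≤ 2*C + 1 := by
        have ha := hz (w i)
        have hb := hz (w (i+1))
        have tri := BanachAux.wordDist_triangle hSsym hSgen (φ (z (w i))) (w i) (φ (z (w (i+1))))
        have tri2 := BanachAux.wordDist_triangle hSsym hSgen (w i) (w (i+1)) (φ (z (w (i+1))))
        have hsymm : wordDist S (w (i+1)) (φ (z (w (i+1)))) = wordDist S (φ (z (w (i+1)))) (w (i+1)) :=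
          BanachAux.wordDist_symm hSsym hSgen _ _
        have := hwstep i hi
        linarith
      have h2 := hd_low (z (w i)) (z (w (i+1)))
      have h3 : C * (wordDist S (φ (z (w i))) (φ (z (w (i+1)))) + C) ≤ C * (3*C+1) := by
        apply mul_le_mul_of_nonneg_left _ (le_of_lt hC)
        linarith
      linarith
    have hend0 : d (↑x : G) (z (w 0)) ≤ 2*C^2 := by
      have ha := hz (w 0)
      rw [hw0] at ha
      have hsymm : wordDist S (φ ↑x) (φ (z (φ ↑x))) = wordDist S (φ (z (φ ↑x))) (φ ↑x) :=
        BanachAux.wordDist_symm hSsym hSgen _ _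
      have h2 := hd_low (↑x : G) (z (φ ↑x))
      have h3 : C * (wordDist S (φ ↑x) (φ (z (φ ↑x))) + C) ≤ C * (2*C) := by
        apply mul_le_mul_of_nonneg_left _ (le_of_lt hC)
        rw [hsymm]; linarith
      have h4 : z (w 0) = z (φ ↑x) := by rw [hw0]
      rw [h4]
      nlinarith
    have hendn : d (z (w n)) 1 ≤ 2*C^2 := by
      have ha := hz (w n)
      rw [hwn] at ha
      have h2 := hd_low (z (φ 1)) 1
      have h3 : C * (wordDist S (φ (z (φ 1))) (φ 1) + C) ≤ C * (2*C) := by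
        apply mul_le_mul_of_nonneg_left _ (le_of_lt hC)
        linarith
      have h4 : z (w n) = z (φ 1) := by rw [hwn]
      rw [h4]
      nlinarith
    -- chain in H from 1 to x
    set e : ℕ → H := fun j => if j = 0 then 1 else if j ≤ n + 1 then ρ (z (w (n + 1 - j))) else x
      with he
    have he0 : e 0 = 1 := by simp [he]
    have hetop : e (n + 2) = x := by simp [he]
    have hestep : ∀ j < n + 2, d (↑(e j) : G) (↑(e (j+1)) : G) ≤ K0 := by
      intro j hj
      rcases Nat.eq_zero_or_pos j with rfl | hj0
      · -- step from 1 to ρ (z (w n))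
        have h1 : e 1 = ρ (z (w n)) := by simp [he]
        rw [he0, h1]
        have h2 := hρs (z (w n))
        have h3 : d (1:G) ↑(ρ (z (w n))) ≤ d 1 (z (w n)) + d (z (w n)) ↑(ρ (z (w n))) :=
          dtri _ _ _
        rw [dsymm (1:G) (z (w n))] at h3
        have hcoe : ((1:H) : G) = (1:G) := rfl
        rw [hcoe]
        nlinarith
      · rcases Nat.lt_or_ge j (n+1) with hjn | hjn
        · -- middle step
          have hj1 : j ≤ n := by omega
          have h1 : e j = ρ (z (w (n + 1 - j))) := by
            simp only [he]
            rw [if_neg (by omega), if_pos (by omega)]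
          have h2 : e (j+1) = ρ (z (w (n - j))) := by
            simp only [he]
            rw [if_neg (by omega), if_pos (by omega), show n + 1 - (j+1) = n - j by omega]
          rw [h1, h2]
          set i := n - j with hi
          have hii : n + 1 - j = i + 1 := by omega
          have hin : i < n := by omega
          rw [hii]
          have ha := hρs (z (w (i+1)))
          have hb := hρs (z (w i))
          have hst := hzstep i hin
          have tri1 : d (↑(ρ (z (w (i+1)))) : G) ↑(ρ (z (w i))) ≤
              d ↑(ρ (z (w (i+1)))) (z (w (i+1))) + d (z (w (i+1))) ↑(ρ (z (w i))) := dtri _ _ _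
          have tri2 : d (z (w (i+1))) (↑(ρ (z (w i))) : G) ≤
              d (z (w (i+1))) (z (w i)) + d (z (w i)) ↑(ρ (z (w i))) := dtri _ _ _
          rw [dsymm (↑(ρ (z (w (i+1)))) : G) (z (w (i+1)))] at tri1
          rw [dsymm (z (w (i+1))) (z (w i))] at tri2
          nlinarith
        · -- last step, j = n + 1
          have hj1 : j = n + 1 := by omega
          subst hj1
          have h1 : e (n+1) = ρ (z (w 0)) := by
            simp only [he]
            rw [if_neg (by omega), if_pos (by omega), show n + 1 - (n+1) = 0 by omega]
          have h2 : e (n+2) = x := hetop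
          rw [h1, h2]
          have ha := hρs (z (w 0))
          have tri1 : d (↑(ρ (z (w 0))) : G) ↑x ≤
              d ↑(ρ (z (w 0))) (z (w 0)) + d (z (w 0)) ↑x := dtri _ _ _
          rw [dsymm (↑(ρ (z (w 0))) : G) (z (w 0)), dsymm (z (w 0)) (↑x : G)] at tri1
          nlinarith
    refine ⟨(List.range (n+2)).map (fun j => (e j)⁻¹ * e (j+1)), ?_, ?_, ?_⟩
    · intro s hs
      simp only [List.mem_map, List.mem_range] at hs
      obtain ⟨j, hj, rfl⟩ := hs
      have hc : ((((e j)⁻¹ * e (j+1)) : H) : G) = (↑(e j) : G)⁻¹ * ↑(e (j+1)) := by push_cast; rfl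
      rw [hc, ← dleft]
      exact le_trans (hestep j hj) hK0le
    · rw [BanachAux.prod_chain e (n+2), he0, hetop]
      simp
    · rw [List.length_map, List.length_range]
      have hbd : wordDist S (φ ↑x) (φ 1) ≤ C * d (↑x : G) 1 + C := (hQI ↑x 1).2
      have hcast : wordDist S (φ ↑x) (φ 1) = (n : ℝ) := by rw [hn]; rfl
      have hdx : (0:ℝ) ≤ d (↑x : G) 1 := dnn _ _
      have hCd : C * d (↑x : G) 1 ≤ K * d (↑x : G) 1 :=
        mul_le_mul_of_nonneg_right (by linarith) hdx
      push_cast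
      rw [hcast] at hbd
      linarith
  obtain ⟨K, hK1, hchain⟩ := key
  have hKpos : (0:ℝ) < K := lt_of_lt_of_le one_pos hK1
  -- the generating set of H
  set SH : Set H := {s : H | d (↑s : G) 1 ≤ K} with hSH
  have hSHfin : SH.Finite := by
    have h1 : SH = (fun h : H => (↑h : G)) ⁻¹' {g : G | d g 1 ≤ K} := rfl
    rw [h1]
    exact (dprop K).preimage (Subtype.coe_injective.injOn)
  have hinv1 : ∀ g : G, d g⁻¹ 1 = d g 1 := by
    intro g
    have h1 := dinv g⁻¹ 1 g
    simp only [mul_inv_cancel, mul_one] at h1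
    rw [← h1, dsymm]
  have hSHsym : ∀ s ∈ SH, s⁻¹ ∈ SH := by
    intro s hs
    have h2 : ((s⁻¹ : H) : G) = ((s : G))⁻¹ := rfl
    simp only [hSH, Set.mem_setOf_eq] at hs ⊢
    rw [h2, hinv1]
    exact hs
  have hSHgen : Subgroup.closure SH = ⊤ := by
    rw [Subgroup.eq_top_iff']
    intro x
    obtain ⟨l, hl, hp, _⟩ := hchain x
    rw [← hp]
    exact Subgroup.list_prod_mem _ (fun s hs => Subgroup.subset_closure (hl s hs))
  have hup : ∀ x : H, (wordLength SH x : ℝ) ≤ K * d (↑x : G) 1 + K := by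
    intro x
    obtain ⟨l, hl, hp, hlen⟩ := hchain x
    have h1 := BanachAux.wordLength_le (S := SH) (fun s hs => hl s hs) hp
    calc (wordLength SH x : ℝ) ≤ (l.length : ℝ) := by exact_mod_cast h1
      _ ≤ K * d (↑x : G) 1 + K := hlen
  have hprodbd : ∀ l : List H, (∀ s ∈ l, s ∈ SH) → d (↑l.prod : G) 1 ≤ K * l.length := by
    intro l
    induction l with
    | nil => intro _; simpa using le_of_eq done1
    | cons s t ih =>
      intro hmem
      have h1 : d ((↑s : G) * ↑t.prod) (↑s : G) = d (↑t.prod : G) 1 := by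
        have h2 := dinv (↑t.prod : G) 1 ↑s
        simpa using h2
      have tri := dtri ((↑s : G) * ↑t.prod) (↑s : G) 1
      have hs := hmem s List.mem_cons_self
      have ht := ih (fun a ha => hmem a (List.mem_cons_of_mem s ha))
      have hcoe : ((t.prod : H) : G) = (↑t.prod : G) := rfl
      have hps : (((s :: t).prod : H) : G) = (↑s : G) * ↑t.prod := by
        rw [List.prod_cons]; push_cast; rfl
      rw [hps, List.length_cons]
      have hcast : ((t.length + 1 : ℕ) : ℝ) = (t.length : ℝ) + 1 := by push_cast; ring
      rw [hcast]
      have hdst : d ((↑s : G) * ↑t.prod) 1 ≤ d (↑t.prod : G) 1 + d (↑s : G) 1 := by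
        rw [← h1]; linarith
      have := hs  -- d ↑s 1 ≤ K
      simp only [hSH, Set.mem_setOf_eq] at hs
      linarith
  have hlow : ∀ x : H, d (↑x : G) 1 ≤ K * (wordLength SH x : ℝ) := by
    intro x
    obtain ⟨l, hl, hp, hlen⟩ := BanachAux.exists_min_word hSHsym hSHgen x
    have h1 := hprodbd l hl
    rw [hp, hlen] at h1
    exact h1
  have hdH : ∀ x y : H, d (↑x : G) ↑y = d (↑(x⁻¹ * y) : G) 1 := by
    intro x y
    have hc : (↑(x⁻¹ * y) : G) = (↑x : G)⁻¹ * ↑y := by push_cast; rfl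
    rw [hc, ← dleft]
  -- infiniteness of H
  have hHinf : Infinite H := by
    by_contra hfin
    rw [not_infinite_iff_finite] at hfin
    have h1 := H.index_mul_card
    have h2 : Nat.card G = 0 := Nat.card_eq_zero_of_infinite
    have h3 : Nat.card H ≠ 0 := Nat.card_pos.ne'
    have h4 : H.index ≠ 0 := hH.index_ne_zero
    rw [h2] at h1
    exact (Nat.mul_ne_zero h4 h3) h1
  have hfar : ∀ r : ℝ, ∃ y : H, r < d (↑y : G) 1 := by
    intro r
    have hfin : {y : H | d (↑y : G) 1 ≤ r}.Finite :=
      ((dprop r).preimage (Subtype.coe_injective.injOn))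
    obtain ⟨y, hy⟩ := (hfin.infinite_compl).nonempty
    exact ⟨y, not_le.mp hy⟩
  -- assemble
  refine ⟨⟨fun x y => dnn _ _, fun x y => ?_, fun x y => dsymm _ _,
      fun x y z => dtri _ ↑y _⟩, fun x y => dint _ _, fun x y z => ?_, fun r => ?_, ?_, ?_⟩
  · rw [dzero]
    exact ⟨fun h => Subtype.coe_injective h, fun h => by rw [h]⟩
  · exact dinv (↑x) (↑y) (↑z)
  · have : {x : H | d (↑x : G) ↑(1:H) ≤ r} = (fun h : H => (↑h : G)) ⁻¹' {g : G | d g 1 ≤ r} := rfl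
    rw [this]
    exact (dprop r).preimage (Subtype.coe_injective.injOn)
  · -- QIToCayley
    refine ⟨SH, ⟨hSHfin, hSHsym, hSHgen⟩, id, K, hKpos, ?_, ?_⟩
    · intro y
      refine ⟨y, ?_⟩
      have h0 : wordLength SH (y⁻¹ * y) ≤ 0 :=
        BanachAux.wordLength_le (S := SH) (x := y⁻¹ * y) (l := []) (by simp) (by simp)
      have : wordDist SH (id y) y = ((wordLength SH (y⁻¹ * y) : ℕ) : ℝ) := rfl
      rw [this]
      have h1 : wordLength SH (y⁻¹ * y) = 0 := Nat.le_zero.mp h0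
      rw [h1]
      exact_mod_cast le_of_lt hKpos
    · intro x y
      have hwd : wordDist SH (id x) (id y) = ((wordLength SH (x⁻¹ * y) : ℕ) : ℝ) := rfl
      constructor
      · have h1 := hlow (x⁻¹ * y)
        rw [← hdH] at h1
        rw [hwd]
        have h2 : K⁻¹ * d (↑x : G) ↑y ≤ (wordLength SH (x⁻¹ * y) : ℝ) := by
          rw [inv_mul_le_iff₀ hKpos]
          exact h1
        have h3 : (0:ℝ) ≤ (wordLength SH (x⁻¹ * y) : ℝ) := Nat.cast_nonneg _
        linarith
      · have h1 := hup (x⁻¹ * y)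
        rw [← hdH] at h1
        rw [hwd]
        exact h1
  · -- boundary functionals are unbounded
    intro h hin
    obtain ⟨⟨u, hu⟩, hnotbus⟩ := hin
    rintro ⟨B, hB⟩
    -- G is countable
    have hcount : Countable G := by
      have hcov : (Set.univ : Set G) = ⋃ n : ℕ, {x : G | d x 1 ≤ n} := by
        ext g
        simp only [Set.mem_univ, Set.mem_iUnion, Set.mem_setOf_eq, true_iff]
        obtain ⟨m, hm⟩ := exists_nat_ge (d g 1)
        exact ⟨m, hm⟩
      have : (Set.univ : Set G).Countable := by
        rw [hcov]
        exact Set.countable_iUnion (fun n => (dprop (n : ℝ)).countable)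
      exact Set.countable_univ_iff.mp this
    -- extract a pointwise convergent subsequence of Busemann functions on G
    set F : ℕ → G → ℝ := fun n g => bus d (↑(u n)) g with hF
    have hFbd : ∀ n, F n ∈ Set.univ.pi (fun g : G => Set.Icc (-(d g 1)) (d g 1)) := by
      intro n g _
      simp only [Set.mem_Icc]
      constructor
      · have := dtri (↑(u n) : G) g 1
        simp only [hF, bus]
        linarith
      · have := dtri (↑(u n) : G) 1 g
        rw [dsymm (1:G) g] at this
        simp only [hF, bus]
        linarith
    have hKc : IsCompact (Set.univ.pi (fun g : G => Set.Icc (-(d g 1)) (d g 1))) :=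
      isCompact_univ_pi (fun g => isCompact_Icc)
    obtain ⟨h', -, ψ, hψ, hconv⟩ := hKc.tendsto_subseq hFbd
    have hpt : ∀ g : G, Tendsto (fun k => F (ψ k) g) atTop (𝓝 (h' g)) := by
      intro g
      have := tendsto_pi_nhds.mp hconv g
      exact this
    -- h' agrees with h on H
    have hagree : ∀ y : H, h' ↑y = h y := by
      intro y
      have h1 : Tendsto (fun k => F (ψ k) ↑y) atTop (𝓝 (h y)) := by
        have h2 := (hu y).comp (hψ.tendsto_atTop)
        exact h2.congr (fun k => rfl)
      exact tendsto_nhds_unique (hpt ↑y) h1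
    -- h' is 1-Lipschitz
    have hlip : ∀ a b : G, |h' a - h' b| ≤ d a b := by
      intro a b
      have hsq : Tendsto (fun k => |F (ψ k) a - F (ψ k) b|) atTop (𝓝 |h' a - h' b|) :=
        ((hpt a).sub (hpt b)).abs
      refine le_of_tendsto hsq (Eventually.of_forall ?_)
      intro k
      simp only [hF, bus]
      have t1 := dtri (↑(u (ψ k)) : G) a b
      have t2 := dtri (↑(u (ψ k)) : G) b a
      rw [dsymm b a] at t2
      rw [abs_le]
      constructor <;> [linarith; linarith]
    by_cases hcase : ∃ x : G, h' = bus d x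
    · obtain ⟨x, hx⟩ := hcase
      obtain ⟨y, hy⟩ := hfar (B + 2 * d x 1)
      have h1 : h y = d x ↑y - d x 1 := by rw [← hagree, hx]; rfl
      have h2 : d (↑y : G) 1 ≤ d x 1 + d x ↑y := by
        have := dtri (↑y : G) x 1
        rw [dsymm (↑y : G) x] at this
        linarith
      have h3 : B < h y := by
        rw [h1]
        linarith
      have h4 := hB y
      rw [abs_le] at h4
      linarith [h4.2]
    · push_neg at hcase
      have hin' : InBoundary d h' := by
        refine ⟨⟨fun k => ↑(u (ψ k)), fun g => hpt g⟩, fun x hx => hcase x hx⟩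
      have hnb := hbdry h' hin'
      push_neg at hnb
      obtain ⟨g, hg⟩ := hnb (B + R)
      set y := ρ g with hy
      have h1 : |h' ↑y| ≥ |h' g| - |h' g - h' ↑y| := by
        have := abs_sub_abs_le_abs_sub (h' g) (h' ↑y)
        linarith
      have h2 : |h' g - h' ↑y| ≤ d g ↑y := hlip g ↑y
      have h3 := hρs g
      have h4 : B < |h' ↑y| := by linarith
      rw [hagree y] at h4
      have h5 := hB y
      linarith
end

section
/- Let G be a finitely generated infinite virtually abelian group. Then there exists a finite symmetric generating set T of G and a metric functional f ∈ ∂(G,d_T) of the word metric d_T whose orbit {x.f : x ∈ G} is finite. -/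
open Filter Topology

/-! ### Auxiliary material for the proof -/

set_option linter.unusedSectionVars false
set_option linter.deprecated false
set_option maxHeartbeats 2000000

namespace VAProof

section WL
variable {G : Type*} [Group G] {S : Set G}

lemma wl_exists (hsym : ∀ s ∈ S, s⁻¹ ∈ S) (hgen : Subgroup.closure S = ⊤) (x : G) :
    ∃ l : List G, (∀ s ∈ l, s ∈ S) ∧ l.prod = x := by
  have hx : x ∈ Subgroup.closure S := hgen ▸ Subgroup.mem_top x
  have hx' : x ∈ Submonoid.closure (S ∪ S⁻¹) := by
    rw [← Subgroup.closure_toSubmonoid]; exact hx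
  obtain ⟨l, hl, hprod⟩ := Submonoid.exists_list_of_mem_closure hx'
  refine ⟨l, fun s hs => ?_, hprod⟩
  rcases hl s hs with h | h
  · exact h
  · simpa using hsym s⁻¹ h

lemma wl_set_nonempty (hsym : ∀ s ∈ S, s⁻¹ ∈ S) (hgen : Subgroup.closure S = ⊤) (x : G) :
    {n : ℕ | ∃ l : List G, (∀ s ∈ l, s ∈ S) ∧ l.length = n ∧ l.prod = x}.Nonempty := by
  obtain ⟨l, h1, h2⟩ := wl_exists hsym hgen x
  exact ⟨l.length, l, h1, rfl, h2⟩

lemma wl_min_list (hsym : ∀ s ∈ S, s⁻¹ ∈ S) (hgen : Subgroup.closure S = ⊤) (x : G) :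
    ∃ l : List G, (∀ s ∈ l, s ∈ S) ∧ l.length = wordLength S x ∧ l.prod = x :=
  Nat.sInf_mem (wl_set_nonempty hsym hgen x)

lemma wl_le_of_list {x : G} (l : List G) (h1 : ∀ s ∈ l, s ∈ S) (h2 : l.prod = x) :
    wordLength S x ≤ l.length :=
  Nat.sInf_le ⟨l, h1, rfl, h2⟩

lemma wl_one : wordLength S (1 : G) = 0 :=
  Nat.le_zero.mp (wl_le_of_list [] (by simp) (by simp))

lemma wl_mul_le (hsym : ∀ s ∈ S, s⁻¹ ∈ S) (hgen : Subgroup.closure S = ⊤) (x y : G) :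
    wordLength S (x * y) ≤ wordLength S x + wordLength S y := by
  obtain ⟨l1, h1, hl1, hp1⟩ := wl_min_list hsym hgen x
  obtain ⟨l2, h2, hl2, hp2⟩ := wl_min_list hsym hgen y
  have := wl_le_of_list (S := S) (l1 ++ l2) (by
    intro s hs; rcases List.mem_append.mp hs with h | h; exacts [h1 s h, h2 s h])
    (by rw [List.prod_append, hp1, hp2])
  simpa [hl1, hl2] using this

lemma wl_inv_le (hsym : ∀ s ∈ S, s⁻¹ ∈ S) (hgen : Subgroup.closure S = ⊤) (x : G) :
    wordLength S x⁻¹ ≤ wordLength S x := by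
  obtain ⟨l, h1, hl, hp⟩ := wl_min_list hsym hgen x
  have := wl_le_of_list (S := S) ((l.map (·⁻¹)).reverse)
    (by
      intro s hs
      simp only [List.mem_reverse, List.mem_map] at hs
      obtain ⟨a, ha, rfl⟩ := hs
      exact hsym a (h1 a ha))
    (by rw [← List.prod_inv_reverse, hp])
  simpa [hl] using this

lemma wl_inv (hsym : ∀ s ∈ S, s⁻¹ ∈ S) (hgen : Subgroup.closure S = ⊤) (x : G) :
    wordLength S x⁻¹ = wordLength S x :=
  le_antisymm (wl_inv_le hsym hgen x) (by simpa using wl_inv_le hsym hgen x⁻¹)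

lemma wl_le_one {t : G} (ht : t ∈ S) : wordLength S t ≤ 1 :=
  wl_le_of_list [t] (by simpa using ht) (by simp)

lemma nu_le_wl (hsym : ∀ s ∈ S, s⁻¹ ∈ S) (hgen : Subgroup.closure S = ⊤)
    (ν : G → ℕ) (hν1 : ν 1 = 0) (hνmul : ∀ a b, ν (a * b) ≤ ν a + ν b)
    {R : ℕ} (hT : ∀ t ∈ S, ν t ≤ R) (x : G) :
    ν x ≤ R * wordLength S x := by
  obtain ⟨l, h1, hl, hp⟩ := wl_min_list hsym hgen x
  rw [← hl]; rw [← hp]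
  clear hp hl
  induction l with
  | nil => simpa using hν1.le
  | cons a l ih =>
    simp only [List.prod_cons, List.length_cons]
    calc ν (a * l.prod) ≤ ν a + ν l.prod := hνmul _ _
    _ ≤ R + R * l.length := by
        exact Nat.add_le_add (hT a (h1 a (by simp))) (ih (fun s hs => h1 s (by simp [hs])))
    _ = R * (l.length + 1) := by ring

end WL

lemma antitone_stab (c : ℕ → ℤ) (hstep : ∀ n, c (n + 1) ≤ c n) (B : ℤ) (hB : ∀ n, B ≤ c n) :
    ∃ n₀, ∀ m, n₀ ≤ m → c m = c n₀ := by
  have hanti : Antitone c := antitone_nat_of_succ_le hstep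
  have hne : (Set.range fun n => (c n - B).toNat).Nonempty := ⟨_, 0, rfl⟩
  obtain ⟨n₀, hn₀⟩ := Nat.sInf_mem hne
  refine ⟨n₀, fun m hm => ?_⟩
  have h1 : c m ≤ c n₀ := hanti hm
  have h2 : (c n₀ - B).toNat ≤ (c m - B).toNat := by
    have hn₀' : (c n₀ - B).toNat = sInf (Set.range fun n => (c n - B).toNat) := hn₀
    rw [hn₀']; exact Nat.sInf_le ⟨m, rfl⟩
  have h3 : c n₀ - B ≤ c m - B := by
    rwa [← Int.toNat_of_nonneg (sub_nonneg.mpr (hB n₀)), ← Int.toNat_of_nonneg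
      (sub_nonneg.mpr (hB m)), Int.ofNat_le]
  omega

lemma avoid {M : Type*} [AddCommGroup M] :
    ∀ L : List (M →+ ℤ), ∃ v : M, ∀ g ∈ L, g ≠ 0 → g v ≠ 0 := by
  intro L
  induction L with
  | nil => exact ⟨0, by simp⟩
  | cons f L ih =>
    obtain ⟨v, hv⟩ := ih
    by_cases hf : f = 0
    · refine ⟨v, fun g hg hgne => ?_⟩
      rcases List.mem_cons.mp hg with rfl | hg
      · exact absurd hf hgne
      · exact hv g hg hgne
    · have : ∃ w, f w ≠ 0 := by
        by_contra h
        push_neg at h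
        exact hf (AddMonoidHom.ext fun w => h w)
      obtain ⟨w, hw⟩ := this
      by_contra hcon
      push_neg at hcon
      have hall : ∀ k : ℕ, ∃ g, g ∈ f :: L ∧ g ≠ 0 ∧ g (v + (k : ℤ) • w) = 0 := by
        intro k
        obtain ⟨g, hg, hgne, hgz⟩ := hcon (v + (k : ℤ) • w)
        exact ⟨g, hg, hgne, hgz⟩
      classical
      choose gk hgk_mem hgk_ne hgk_zero using hall
      have hinj : Set.InjOn gk ↑(Finset.range (L.length + 2)) := by
        intro k1 _ k2 _ hg
        have e1 : gk k1 v + (k1 : ℤ) * gk k1 w = 0 := by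
          have := hgk_zero k1; rwa [map_add, map_zsmul, smul_eq_mul] at this
        have e2 : gk k1 v + (k2 : ℤ) * gk k1 w = 0 := by
          have := hgk_zero k2; rw [← hg] at this
          rwa [map_add, map_zsmul, smul_eq_mul] at this
        by_cases hgw : gk k1 w = 0
        · exfalso
          have hgv : gk k1 v = 0 := by rw [hgw] at e1; linarith
          rcases List.mem_cons.mp (hgk_mem k1) with h | h
          · exact hw (by rw [← h, hgw])
          · exact hv _ h (hgk_ne k1) hgv
        · have : (k1 : ℤ) = (k2 : ℤ) := by
            have h0 : ((k1 : ℤ) - k2) * gk k1 w = 0 := by ring_nf; linarith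
            rcases mul_eq_zero.mp h0 with h | h
            · linarith
            · exact absurd h hgw
          exact_mod_cast this
      have hmaps : ∀ k ∈ Finset.range (L.length + 2), gk k ∈ (f :: L).toFinset := by
        intro k _; simp only [List.mem_toFinset]; exact hgk_mem k
      have hcard := Finset.card_le_card_of_injOn gk hmaps hinj
      have : (f :: L).toFinset.card ≤ L.length + 1 := by
        simpa using (f :: L).toFinset_card_le
      simp only [Finset.card_range] at hcard
      omega

section Rep
variable {G : Type*} [Group G] (A : Subgroup G) [A.Normal] [Finite (G ⧸ A)]

open scoped Classical in
noncomputable def rep' : G → G := fun g =>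
  if g ∈ A then 1 else (QuotientGroup.mk g : G ⧸ A).out

lemma rep'_spec (g : G) : (QuotientGroup.mk (rep' A g) : G ⧸ A) = QuotientGroup.mk g := by
  classical
  unfold rep'
  split_ifs with h
  · rw [(QuotientGroup.eq_one_iff g).mpr h]
    simp
  · exact QuotientGroup.out_eq' _

lemma rep'_mem (g : G) : g * (rep' A g)⁻¹ ∈ A := by
  have h := rep'_spec A g
  rw [QuotientGroup.eq] at h
  have h2 : (rep' A g)⁻¹ * g ∈ A := h
  exact (Subgroup.Normal.mem_comm_iff ‹A.Normal›).mp h2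

lemma rep'_of_mem {g : G} (hg : g ∈ A) : rep' A g = 1 := by
  classical
  unfold rep'
  rw [if_pos hg]

lemma rep'_eq_of_eq {g h : G} (hq : (QuotientGroup.mk g : G ⧸ A) = QuotientGroup.mk h) :
    rep' A g = rep' A h := by
  classical
  have hmem : g ∈ A ↔ h ∈ A := by
    rw [← QuotientGroup.eq_one_iff (N := A) g, ← QuotientGroup.eq_one_iff (N := A) h, hq]
  unfold rep'
  split_ifs with h1 h2 h2
  · rfl
  · exact absurd (hmem.mp h1) h2
  · exact absurd (hmem.mpr h2) h1
  · rw [hq]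

lemma rep'_idem (g : G) : rep' A (rep' A g) = rep' A g :=
  rep'_eq_of_eq A (rep'_spec A g)

lemma rep'_finite_range : (Set.range (rep' A)).Finite := by
  classical
  have : Set.range (rep' A) ⊆ {1} ∪ Set.range (fun q : G ⧸ A => q.out) := by
    rintro x ⟨g, rfl⟩
    unfold rep'
    split_ifs
    · exact Or.inl rfl
    · exact Or.inr ⟨_, rfl⟩
  exact Set.Finite.subset ((Set.finite_singleton 1).union (Set.finite_range _)) this

lemma rep'_mul (g h : G) : rep' A (g * h) = rep' A (rep' A g * rep' A h) := by
  apply rep'_eq_of_eq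
  rw [QuotientGroup.mk_mul, QuotientGroup.mk_mul, rep'_spec, rep'_spec]

end Rep

/-- The abstract dynamical core. -/
theorem main_abstract {G : Type*} [Group G] (T : Set G)
    (hsym : ∀ s ∈ T, s⁻¹ ∈ T) (hgen : Subgroup.closure T = ⊤)
    (v : G) (hvT : v ∈ T)
    (hlen : ∀ m : ℕ, wordLength T (v ^ m) = m)
    (Kset : Set G)
    (hKcomm : ∀ b ∈ Kset, Commute v b)
    (hKinv : ∀ b ∈ Kset, b⁻¹ ∈ Kset)
    (hKword : ∀ b ∈ Kset, ∃ k : ℕ, wordLength T (b * (v ^ k)⁻¹) ≤ k)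
    (Y : Set G) (hY : Y.Finite)
    (hdec : ∀ x : G, ∃ (t : ℤ) (b : G), b ∈ Kset ∧ ∃ y ∈ Y, x⁻¹ = v ^ t * b * y) :
    ∃ f : G → ℝ,
      ((∃ u : ℕ → G, ∀ y : G, Tendsto (fun n => bus (wordDist T) (u n) y) atTop (𝓝 (f y))) ∧
        ∀ x : G, f ≠ bus (wordDist T) x) ∧
      (Set.range fun x : G => act x f).Finite := by
  classical
  set wl : G → ℕ := wordLength T with hwl
  have hwl_mul : ∀ x y : G, wl (x * y) ≤ wl x + wl y := wl_mul_le hsym hgen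
  have hwl_inv : ∀ x : G, wl x⁻¹ = wl x := wl_inv hsym hgen
  have hwl_vpow : ∀ m : ℕ, wl ((v ^ m)⁻¹) = m := fun m => by rw [hwl_inv, hlen]
  set c : ℕ → G → ℤ := fun m z => (wl ((v ^ m)⁻¹ * z) : ℤ) - m with hc
  have hc_step : ∀ z m, c (m + 1) z ≤ c m z := by
    intro z m
    have h1 : (v ^ (m + 1))⁻¹ * z = v⁻¹ * ((v ^ m)⁻¹ * z) := by
      rw [pow_succ]; group
    have h2 : wl ((v ^ (m + 1))⁻¹ * z) ≤ wl v⁻¹ + wl ((v ^ m)⁻¹ * z) := by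
      rw [h1]; exact hwl_mul _ _
    have h3 : wl v⁻¹ ≤ 1 := by rw [hwl_inv]; exact wl_le_one hvT
    simp only [hc]
    push_cast
    have : (wl ((v ^ (m + 1))⁻¹ * z) : ℤ) ≤ 1 + wl ((v ^ m)⁻¹ * z) := by
      calc (wl ((v ^ (m + 1))⁻¹ * z) : ℤ) ≤ (wl v⁻¹ : ℤ) + wl ((v ^ m)⁻¹ * z) := by
            exact_mod_cast h2
        _ ≤ 1 + wl ((v ^ m)⁻¹ * z) := by
            have : (wl v⁻¹ : ℤ) ≤ 1 := by exact_mod_cast h3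
            linarith
    linarith
  have hc_lb : ∀ z m, -(wl z⁻¹ : ℤ) ≤ c m z := by
    intro z m
    have h1 : (v ^ m)⁻¹ = ((v ^ m)⁻¹ * z) * z⁻¹ := by group
    have h2 : wl ((v ^ m)⁻¹) ≤ wl ((v ^ m)⁻¹ * z) + wl z⁻¹ := by
      conv_lhs => rw [h1]
      exact hwl_mul _ _
    have h2' : m ≤ wl ((v ^ m)⁻¹ * z) + wl z⁻¹ := by
      have := h2; rwa [hwl_vpow m] at this
    have h3 : (m : ℤ) ≤ (wl ((v ^ m)⁻¹ * z) : ℤ) + wl z⁻¹ := by exact_mod_cast h2'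
    simp only [hc]
    linarith
  have hstab : ∀ z : G, ∃ n₀, ∀ m, n₀ ≤ m → c m z = c n₀ z := by
    intro z
    exact antitone_stab (fun m => c m z) (fun m => hc_step z m) (-(wl z⁻¹ : ℤ)) (hc_lb z)
  choose N₀ hN₀ using hstab
  set F : G → ℤ := fun z => c (N₀ z) z with hF
  have hF_ev : ∀ z m, N₀ z ≤ m → c m z = F z := fun z m hm => hN₀ z m hm
  have hF_le : ∀ z m, F z ≤ c m z := by
    intro z m
    rcases le_total (N₀ z) m with h | h
    · exact (hF_ev z m h).ge
    · have : Antitone (fun m => c m z) := antitone_nat_of_succ_le (fun n => hc_step z n)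
      exact this h
  set f : G → ℝ := fun z => (F z : ℝ) with hf
  have hshift1 : ∀ z : G, F (v * z) = F z - 1 := by
    intro z
    set m := max (N₀ (v * z)) (N₀ z + 1) with hm
    have hm1 : N₀ (v * z) ≤ m := le_max_left _ _
    have hm2 : N₀ z + 1 ≤ m := le_max_right _ _
    obtain ⟨n, hn⟩ : ∃ n, m = n + 1 := ⟨m - 1, by omega⟩
    have key : c m (v * z) = c n z - 1 := by
      have h1 : (v ^ m)⁻¹ * (v * z) = (v ^ n)⁻¹ * z := by
        rw [hn, pow_succ']; group
      simp only [hc]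
      rw [h1, hn]
      push_cast
      ring
    have e1 : c m (v * z) = F (v * z) := hF_ev _ m hm1
    have e2 : c n z = F z := hF_ev _ n (by omega)
    rw [e1, e2] at key
    exact key
  have hshiftinv : ∀ z : G, F (v⁻¹ * z) = F z + 1 := by
    intro z
    have := hshift1 (v⁻¹ * z)
    rw [show v * (v⁻¹ * z) = z by group] at this
    omega
  have hshiftz : ∀ (t : ℤ) (z : G), F (v ^ t * z) = F z - t := by
    intro t
    induction t using Int.induction_on with
    | zero => intro z; simp
    | succ n ih =>
      intro z
      have h1 : v ^ ((n : ℤ) + 1) * z = v * (v ^ (n : ℤ) * z) := by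
        rw [zpow_add_one]; group
      rw [h1, hshift1, ih]; ring
    | pred n ih =>
      intro z
      have h1 : v ^ (-(n : ℤ) - 1) * z = v⁻¹ * (v ^ (-(n : ℤ)) * z) := by
        rw [zpow_sub_one]; group
      rw [h1, hshiftinv, ih]; ring
  have hC1le : ∀ b ∈ Kset, ∀ z : G, F (b * z) ≤ F z := by
    intro b hb z
    obtain ⟨k, hk⟩ := hKword b hb
    have key : ∀ j : ℕ, c (j + k) (b * z) ≤ c j z := by
      intro j
      have hcomm : (v ^ (j + k))⁻¹ * (b * z) = (b * (v ^ k)⁻¹) * ((v ^ j)⁻¹ * z) := by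
        have hbv : Commute b ((v ^ k)⁻¹ * (v ^ j)⁻¹) := by
          have := (hKcomm b hb).symm
          exact (this.pow_right k).inv_right.mul_right ((this.pow_right j).inv_right)
        calc (v ^ (j + k))⁻¹ * (b * z) = ((v ^ k)⁻¹ * (v ^ j)⁻¹) * b * z := by
              rw [pow_add]; group
          _ = b * ((v ^ k)⁻¹ * (v ^ j)⁻¹) * z := by rw [← hbv.eq]
          _ = (b * (v ^ k)⁻¹) * ((v ^ j)⁻¹ * z) := by group
      have h2 : wl ((v ^ (j + k))⁻¹ * (b * z)) ≤ k + wl ((v ^ j)⁻¹ * z) := by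
        rw [hcomm]
        calc wl ((b * (v ^ k)⁻¹) * ((v ^ j)⁻¹ * z))
            ≤ wl (b * (v ^ k)⁻¹) + wl ((v ^ j)⁻¹ * z) := hwl_mul _ _
          _ ≤ k + wl ((v ^ j)⁻¹ * z) := by exact Nat.add_le_add_right hk _
      simp only [hc]
      push_cast
      have : (wl ((v ^ (j + k))⁻¹ * (b * z)) : ℤ) ≤ k + wl ((v ^ j)⁻¹ * z) := by
        exact_mod_cast h2
      linarith
    calc F (b * z) ≤ c (N₀ z + k) (b * z) := hF_le _ _
      _ ≤ c (N₀ z) z := key (N₀ z)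
      _ = F z := by rw [hF]
  have hC1 : ∀ b ∈ Kset, ∀ z : G, F (b * z) = F z := by
    intro b hb z
    refine le_antisymm (hC1le b hb z) ?_
    have := hC1le b⁻¹ (hKinv b hb) (b * z)
    rw [show b⁻¹ * (b * z) = z by group] at this
    exact this
  refine ⟨f, ⟨⟨fun m => v ^ m, fun y => ?_⟩, fun x => ?_⟩, ?_⟩
  · have hbus : ∀ m : ℕ, bus (wordDist T) (v ^ m) y = ((c m y : ℤ) : ℝ) := by
      intro m
      have h1 : wordLength T ((v ^ m)⁻¹ * 1) = m := by rw [mul_one]; exact hwl_vpow m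
      simp only [bus, wordDist, h1, hc]
      push_cast
      ring
    have : ∀ᶠ m in atTop, bus (wordDist T) (v ^ m) y = f y := by
      filter_upwards [eventually_ge_atTop (N₀ y)] with m hm
      rw [hbus m, hF_ev y m hm]
    exact Tendsto.congr' (by filter_upwards [this] with m hm; exact hm.symm) tendsto_const_nhds
  · intro hEq
    set n : ℕ := wl x⁻¹ + 1 with hn
    have h1 : F (v ^ n) ≤ -(n : ℤ) := by
      have := hF_le (v ^ n) n
      simp only [hc] at this ⊢
      rw [show (v ^ n)⁻¹ * v ^ n = 1 by group] at this
      rw [hwl] at this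
      rw [wl_one] at this
      simpa using this
    have h2 : bus (wordDist T) x (v ^ n) ≥ -((n : ℝ) - 1) := by
      simp only [bus, wordDist, mul_one, hn]
      have : (0 : ℝ) ≤ (wl (x⁻¹ * v ^ n) : ℝ) := by positivity
      push_cast
      linarith
    have h3 : f (v ^ n) = bus (wordDist T) x (v ^ n) := by rw [hEq]
    simp only [hf] at h3
    have h4 : ((F (v ^ n) : ℤ) : ℝ) ≤ -(n : ℝ) := by exact_mod_cast h1
    rw [h3] at h4
    have : (1 : ℝ) ≤ 0 := by linarith
    linarith
  · have hact : ∀ x : G, ∃ y ∈ Y, act x f = act y⁻¹ f := by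
      intro x
      obtain ⟨t, b, hb, y, hy, hxy⟩ := hdec x
      refine ⟨y, hy, ?_⟩
      funext z
      have key : ∀ w : G, F (x⁻¹ * w) = F (y * w) - t := by
        intro w
        rw [hxy]
        rw [show v ^ t * b * y * w = v ^ t * (b * (y * w)) by group]
        rw [hshiftz, hC1 b hb]
      simp only [act, hf, inv_inv]
      have k1 := key z
      have k2 := key 1
      rw [mul_one] at k2
      rw [k1, k2]
      push_cast
      ring
    have hsub : (Set.range fun x : G => act x f) ⊆ (fun y => act y⁻¹ f) '' Y := by
      rintro _ ⟨x, rfl⟩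
      obtain ⟨y, hy, hxy⟩ := hact x
      exact ⟨y, hy, hxy.symm⟩
    exact Set.Finite.subset (hY.image _) hsub

end VAProof

/-- A finitely generated infinite virtually abelian group has a
finite symmetric generating set `T` such that the metric-functional boundary of
the word metric `d_T` contains a point with finite orbit. -/
theorem virtually_abelian_exists_cayley_finiteOrbit
    {G : Type*} [Group G] [Group.FG G] [Infinite G]
    (hab : ∃ A : Subgroup G, A.FiniteIndex ∧ ∀ x y : A, x * y = y * x) :
    ∃ T : Set G, FinSymGen T ∧
      ∃ f : G → ℝ, InBoundary (wordDist T) f ∧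
        (Set.range fun x : G => act x f).Finite := by
  classical
  obtain ⟨A₀, hA₀idx, hA₀comm⟩ := hab
  set A : Subgroup G := A₀.normalCore with hAdef
  haveI hAnorm : A.Normal := Subgroup.normalCore_normal A₀
  haveI : A.FiniteIndex := Subgroup.finiteIndex_normalCore A₀
  haveI : Finite (G ⧸ A) := Subgroup.finite_quotient_of_finiteIndex
  have hAle : A ≤ A₀ := Subgroup.normalCore_le A₀
  have hcommA : ∀ x y : G, x ∈ A → y ∈ A → x * y = y * x := by
    intro x y hx hy
    exact congrArg Subtype.val (hA₀comm ⟨x, hAle hx⟩ ⟨y, hAle hy⟩)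
  letI : CommGroup ↥A :=
    { (inferInstance : Group ↥A) with
      mul_comm := fun a b => Subtype.ext (hcommA a b a.2 b.2) }
  haveI : Group.FG ↥A := Subgroup.fg_of_index_ne_zero A
  haveI hAinf : Infinite ↥A := by
    by_contra h
    rw [not_infinite_iff_finite] at h
    haveI : Finite G := Finite.of_equiv _ (Subgroup.groupEquivQuotientProdSubgroup (s := A)).symm
    exact not_finite G
  haveI : Module.Finite ℤ (Additive ↥A) := Module.Finite.iff_addGroup_fg.mpr inferInstance
  -- a nonzero homomorphism to ℤ
  have hφ : ∃ φ : (Additive ↥A) →+ ℤ, φ ≠ 0 := by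
    have hnotor : ¬ Module.IsTorsion ℤ (Additive ↥A) := by
      intro htor
      haveI : Finite (Additive ↥A) := Module.finite_of_fg_torsion _ htor
      exact not_finite (Additive ↥A)
    set tor := Submodule.torsion ℤ (Additive ↥A)
    haveI : Module.Finite ℤ ((Additive ↥A) ⧸ tor) := Module.Finite.quotient ℤ tor
    haveI : Module.Free ℤ ((Additive ↥A) ⧸ tor) := Module.free_of_finite_type_torsion_free'
    set b := Module.Free.chooseBasis ℤ ((Additive ↥A) ⧸ tor)
    haveI : Nonempty (Module.Free.ChooseBasisIndex ℤ ((Additive ↥A) ⧸ tor)) := by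
      by_contra h
      rw [not_nonempty_iff] at h
      apply hnotor
      intro m
      have hzero : ∀ x : (Additive ↥A) ⧸ tor, x = 0 := by
        intro x
        have hx : b.repr x = 0 := Finsupp.ext fun i => (IsEmpty.false i).elim
        have := congrArg b.repr.symm hx
        simpa using this
      have h0 : (Submodule.Quotient.mk m : (Additive ↥A) ⧸ tor) = 0 := hzero _
      rw [Submodule.Quotient.mk_eq_zero] at h0
      exact h0
    obtain ⟨i⟩ := ‹Nonempty (Module.Free.ChooseBasisIndex ℤ ((Additive ↥A) ⧸ tor))›
    refine ⟨((b.coord i).comp (tor.mkQ)).toAddMonoidHom, ?_⟩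
    intro h
    have h1 : (b.coord i) (b i) = 1 := by simp
    obtain ⟨m, hm⟩ := Submodule.Quotient.mk_surjective tor (b i)
    have h2 : ((b.coord i).comp (tor.mkQ)).toAddMonoidHom m = 0 := by rw [h]; rfl
    simp only [LinearMap.toAddMonoidHom_coe, LinearMap.coe_comp, Function.comp_apply,
      Submodule.mkQ_apply] at h2
    rw [hm] at h2
    rw [h1] at h2
    exact one_ne_zero h2
  obtain ⟨φtop, hφtop⟩ := hφ
  -- the embedding of the additive group into G
  set ι : Additive ↥A → G := fun m => ((Additive.toMul m : ↥A) : G) with hι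
  have hι_mem : ∀ m, ι m ∈ A := fun m => (Additive.toMul m).2
  have hι_add : ∀ m n, ι (m + n) = ι m * ι n := fun m n => rfl
  have hι_neg : ∀ m, ι (-m) = (ι m)⁻¹ := fun m => rfl
  have hι_zero : ι 0 = 1 := rfl
  have hι_zsmul : ∀ (t : ℤ) (m : Additive ↥A), ι (t • m) = (ι m) ^ t := by
    intro t m
    show ((Additive.toMul (t • m) : ↥A) : G) = _
    rw [toMul_zsmul]
    norm_cast
  -- coset representatives
  set rep : G → G := VAProof.rep' A with hrep
  have hrepA : ∀ {g : G}, g ∈ A → rep g = 1 := fun {g} hg => VAProof.rep'_of_mem A hg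
  have hrep_mem : ∀ g, g * (rep g)⁻¹ ∈ A := VAProof.rep'_mem A
  set R_fin : Finset G := (VAProof.rep'_finite_range A).toFinset with hR_fin
  have hmemR : ∀ g, rep g ∈ R_fin := fun g => by
    rw [hR_fin, Set.Finite.mem_toFinset]; exact ⟨g, rfl⟩
  have hR1 : (1 : G) ∈ R_fin := by
    have h1 : rep 1 = 1 := hrepA (one_mem A)
    rw [← h1]; exact hmemR 1
  have hRrep : ∀ r ∈ R_fin, rep r = r := by
    intro r hr
    rw [hR_fin, Set.Finite.mem_toFinset] at hr
    obtain ⟨g, rfl⟩ := hr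
    exact VAProof.rep'_idem A g
  set afun : G → G := fun g => g * (rep g)⁻¹ with hafun
  have hafun_mem : ∀ g, afun g ∈ A := hrep_mem
  have hafunA : ∀ {g : G}, g ∈ A → afun g = g := by
    intro g hg
    simp only [hafun, hrepA hg, inv_one, mul_one]
  -- the extended homomorphism
  set φt : G → ℤ := fun g => if h : g ∈ A then φtop (Additive.ofMul (⟨g, h⟩ : ↥A)) else 0 with hφt
  have hφt_eq : ∀ (g : G) (hg : g ∈ A), φt g = φtop (Additive.ofMul (⟨g, hg⟩ : ↥A)) :=
    fun g hg => dif_pos hg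
  have hφt_ι : ∀ m, φt (ι m) = φtop m := by
    intro m
    rw [hφt_eq (ι m) (hι_mem m)]
    congr 1
  have hφt_mul : ∀ {x y : G}, x ∈ A → y ∈ A → φt (x * y) = φt x + φt y := by
    intro x y hx hy
    rw [hφt_eq _ (mul_mem hx hy), hφt_eq _ hx, hφt_eq _ hy, ← map_add]
    rfl
  have hφt_one : φt 1 = 0 := by
    rw [hφt_eq 1 (one_mem A)]
    exact map_zero φtop
  have hφt_inv : ∀ {x : G}, x ∈ A → φt x⁻¹ = - φt x := by
    intro x hx
    have h1 : φt (x⁻¹ * x) = φt x⁻¹ + φt x := hφt_mul (inv_mem hx) hx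
    rw [inv_mul_cancel, hφt_one] at h1
    linarith
  have hφt_pow : ∀ {x : G}, x ∈ A → ∀ n : ℕ, φt (x ^ n) = n * φt x := by
    intro x hx n
    induction n with
    | zero => simpa using hφt_one
    | succ n ih =>
      rw [pow_succ, hφt_mul (pow_mem hx n) hx, ih]
      push_cast
      ring
  -- the conjugation-invariant weight
  set ℓf : G → ℕ := fun x => R_fin.sup (fun r => (φt (r * x * r⁻¹)).natAbs) with hℓ
  have hℓ_ge : ∀ (x : G), ∀ r ∈ R_fin, (φt (r * x * r⁻¹)).natAbs ≤ ℓf x :=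
    fun x r hr => Finset.le_sup (f := fun r => (φt (r * x * r⁻¹)).natAbs) hr
  have hℓ_le : ∀ (x : G) (K : ℕ), (∀ r ∈ R_fin, (φt (r * x * r⁻¹)).natAbs ≤ K) → ℓf x ≤ K :=
    fun x K h => Finset.sup_le (f := fun r => (φt (r * x * r⁻¹)).natAbs) h
  have hconjA : ∀ (r x : G), x ∈ A → r * x * r⁻¹ ∈ A := fun r x hx => hAnorm.conj_mem x hx r
  have hℓ_mul : ∀ {x y : G}, x ∈ A → y ∈ A → ℓf (x * y) ≤ ℓf x + ℓf y := by
    intro x y hx hy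
    refine hℓ_le _ _ fun r hr => ?_
    have h1 : r * (x * y) * r⁻¹ = (r * x * r⁻¹) * (r * y * r⁻¹) := by group
    rw [h1, hφt_mul (hconjA r x hx) (hconjA r y hy)]
    calc (φt (r * x * r⁻¹) + φt (r * y * r⁻¹)).natAbs
        ≤ (φt (r * x * r⁻¹)).natAbs + (φt (r * y * r⁻¹)).natAbs := Int.natAbs_add_le _ _
      _ ≤ ℓf x + ℓf y := Nat.add_le_add (hℓ_ge x r hr) (hℓ_ge y r hr)
  have hℓ_inv : ∀ {x : G}, x ∈ A → ℓf x⁻¹ = ℓf x := by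
    intro x hx
    have hterm : ∀ r : G, (φt (r * x⁻¹ * r⁻¹)).natAbs = (φt (r * x * r⁻¹)).natAbs := by
      intro r
      have h1 : r * x⁻¹ * r⁻¹ = (r * x * r⁻¹)⁻¹ := by group
      rw [h1, hφt_inv (hconjA r x hx), Int.natAbs_neg]
    exact Finset.sup_congr rfl (fun r _ => hterm r)
  have hℓ_one : ℓf 1 = 0 := by
    refine Nat.le_zero.mp (hℓ_le _ _ fun r hr => ?_)
    rw [show r * 1 * r⁻¹ = 1 by group, hφt_one]
    simp
  have hφt_conj_rep : ∀ (u x : G), x ∈ A → φt (u * x * u⁻¹) = φt (rep u * x * (rep u)⁻¹) := by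
    intro u x hx
    have ha : afun u ∈ A := hafun_mem u
    have hw : rep u * x * (rep u)⁻¹ ∈ A := hconjA _ _ hx
    have hcm := hcommA _ _ ha hw
    have hid : u * x * u⁻¹ = afun u * (rep u * x * (rep u)⁻¹) * (afun u)⁻¹ := by
      simp only [hafun]; group
    rw [hid, show afun u * (rep u * x * (rep u)⁻¹) * (afun u)⁻¹ = rep u * x * (rep u)⁻¹ from by
      rw [hcm]; group]
  have hℓ_conj : ∀ (g x : G), x ∈ A → ℓf (g * x * g⁻¹) = ℓf x := by
    intro g x hx
    apply le_antisymm
    · refine hℓ_le _ _ fun r hr => ?_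
      have h1 : r * (g * x * g⁻¹) * r⁻¹ = (r * g) * x * (r * g)⁻¹ := by group
      rw [h1, hφt_conj_rep (r * g) x hx]
      exact hℓ_ge x (rep (r * g)) (hmemR _)
    · refine hℓ_le _ _ fun r hr => ?_
      have hr' : rep r = r := hRrep r hr
      set r2 := rep (r * g⁻¹) with hr2
      have h2 : r2 * (g * x * g⁻¹) * r2⁻¹ = (r2 * g) * x * (r2 * g)⁻¹ := by group
      have e1 : (QuotientGroup.mk (r2 * g) : G ⧸ A) = QuotientGroup.mk r := by
        calc (QuotientGroup.mk (r2 * g) : G ⧸ A)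
            = QuotientGroup.mk (r * g⁻¹) * QuotientGroup.mk g := by
              rw [QuotientGroup.mk_mul, hr2, hrep, VAProof.rep'_spec]
          _ = QuotientGroup.mk r := by
              rw [← QuotientGroup.mk_mul]
              exact congrArg _ (by group)
      have h4 : rep (r2 * g) = r := by
        have := VAProof.rep'_eq_of_eq A e1
        rw [← hrep] at this
        rw [this, hr']
      have h3 : φt (r2 * (g * x * g⁻¹) * r2⁻¹) = φt (r * x * r⁻¹) := by
        rw [h2, hφt_conj_rep (r2 * g) x hx, h4]
      calc (φt (r * x * r⁻¹)).natAbs = (φt (r2 * (g * x * g⁻¹) * r2⁻¹)).natAbs := by rw [h3]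
        _ ≤ ℓf (g * x * g⁻¹) := hℓ_ge _ r2 (hmemR _)
  have hconj_pow : ∀ (r x : G) (n : ℕ), r * x ^ n * r⁻¹ = (r * x * r⁻¹) ^ n := by
    intro r x n
    induction n with
    | zero => group
    | succ n ih => rw [pow_succ, pow_succ, ← ih]; group
  have hℓ_pow : ∀ {x : G}, x ∈ A → ∀ n : ℕ, ℓf (x ^ n) = n * ℓf x := by
    intro x hx n
    have hterm : ∀ r : G, (φt (r * x ^ n * r⁻¹)).natAbs = n * (φt (r * x * r⁻¹)).natAbs := by
      intro r
      rw [hconj_pow, hφt_pow (hconjA r x hx) n, Int.natAbs_mul, Int.natAbs_natCast]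
    apply le_antisymm
    · refine hℓ_le _ _ fun r hr => ?_
      rw [hterm r]
      exact Nat.mul_le_mul_left n (hℓ_ge x r hr)
    · obtain ⟨r0, hr0mem, hr0⟩ := Finset.exists_mem_eq_sup R_fin ⟨1, hR1⟩
        (fun r => (φt (r * x * r⁻¹)).natAbs)
      calc n * ℓf x = n * (φt (r0 * x * r0⁻¹)).natAbs := by
            have : ℓf x = (φt (r0 * x * r0⁻¹)).natAbs := hr0
            rw [this]
        _ = (φt (r0 * x ^ n * r0⁻¹)).natAbs := (hterm r0).symm
        _ ≤ ℓf (x ^ n) := hℓ_ge _ r0 hr0mem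
  -- the conjugate functionals
  set ψ : G → (Additive ↥A →+ ℤ) := fun r => AddMonoidHom.mk' (fun m => φt (r * ι m * r⁻¹)) (by
    intro m n
    show φt (r * ι (m + n) * r⁻¹) = φt (r * ι m * r⁻¹) + φt (r * ι n * r⁻¹)
    have h1 : r * ι (m + n) * r⁻¹ = (r * ι m * r⁻¹) * (r * ι n * r⁻¹) := by
      rw [hι_add]; group
    rw [h1]
    exact hφt_mul (hconjA _ _ (hι_mem m)) (hconjA _ _ (hι_mem n))) with hψ
  have hψ_apply : ∀ r m, ψ r m = φt (r * ι m * r⁻¹) := fun r m => rfl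
  have hψ1 : ψ 1 = φtop := by
    refine AddMonoidHom.ext fun m => ?_
    rw [hψ_apply, show (1 : G) * ι m * (1 : G)⁻¹ = ι m by group]
    exact hφt_ι m
  -- choice of a generic direction
  set L0 : List (Additive ↥A →+ ℤ) :=
    (R_fin.toList.map ψ)
      ++ ((R_fin ×ˢ R_fin).toList.map (fun p => ψ p.1 - ψ p.2))
      ++ ((R_fin ×ˢ R_fin).toList.map (fun p => ψ p.1 + ψ p.2)) with hL0
  obtain ⟨v₀, hv₀⟩ := VAProof.avoid L0
  have hmemL_ψ : ∀ r ∈ R_fin, ψ r ∈ L0 := by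
    intro r hr
    rw [hL0]
    refine List.mem_append_left _ (List.mem_append_left _ ?_)
    exact List.mem_map.mpr ⟨r, Finset.mem_toList.mpr hr, rfl⟩
  have hmemL_sub : ∀ r ∈ R_fin, ∀ r' ∈ R_fin, ψ r - ψ r' ∈ L0 := by
    intro r hr r' hr'
    rw [hL0]
    refine List.mem_append_left _ (List.mem_append_right _ ?_)
    exact List.mem_map.mpr ⟨(r, r'), Finset.mem_toList.mpr (Finset.mem_product.mpr ⟨hr, hr'⟩), rfl⟩
  have hmemL_add : ∀ r ∈ R_fin, ∀ r' ∈ R_fin, ψ r + ψ r' ∈ L0 := by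
    intro r hr r' hr'
    rw [hL0]
    refine List.mem_append_right _ ?_
    exact List.mem_map.mpr ⟨(r, r'), Finset.mem_toList.mpr (Finset.mem_product.mpr ⟨hr, hr'⟩), rfl⟩
  have hterm_eq : ∀ (r : G) (m : Additive ↥A), φt (r * ι m * r⁻¹) = ψ r m := fun r m => rfl
  have hℓι_ge : ∀ (m : Additive ↥A), ∀ r ∈ R_fin, (ψ r m).natAbs ≤ ℓf (ι m) := by
    intro m r hr
    rw [← hterm_eq]
    exact hℓ_ge (ι m) r hr
  set W₀ : ℕ := ℓf (ι v₀) with hW₀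
  have hW₀_pos : 1 ≤ W₀ := by
    have hne : ψ 1 ≠ 0 := by rw [hψ1]; exact hφtop
    have h1 : ψ 1 v₀ ≠ 0 := hv₀ _ (hmemL_ψ 1 hR1) hne
    calc 1 ≤ (ψ 1 v₀).natAbs := Int.natAbs_pos.mpr h1
      _ ≤ W₀ := hℓι_ge v₀ 1 hR1
  obtain ⟨rs, hrs_mem, hrs⟩ := Finset.exists_mem_eq_sup R_fin ⟨1, hR1⟩
    (fun r => (φt (r * (ι v₀) * r⁻¹)).natAbs)
  have hrs' : (ψ rs v₀).natAbs = W₀ := by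
    have h1 : W₀ = (φt (rs * (ι v₀) * rs⁻¹)).natAbs := hrs
    rw [h1, hterm_eq]
  set ψs : Additive ↥A →+ ℤ := if 0 ≤ ψ rs v₀ then ψ rs else -ψ rs with hψs
  have hψs_v₀ : ψs v₀ = (W₀ : ℤ) := by
    rw [hψs]
    split_ifs with h
    · rw [← hrs', Int.natAbs_of_nonneg h]
    · push_neg at h
      have h2 := Int.ofNat_natAbs_of_nonpos h.le
      simp only [AddMonoidHom.neg_apply]
      rw [← hrs']
      omega
  have hψs_cases : ψs = ψ rs ∨ ψs = -ψ rs := by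
    rw [hψs]; split_ifs <;> [exact Or.inl rfl; exact Or.inr rfl]
  have hmargin : ∀ r ∈ R_fin, ψ r = ψs ∨ ψ r = -ψs ∨ (ψ r v₀).natAbs ≤ W₀ - 1 := by
    intro r hr
    by_cases hle : (ψ r v₀).natAbs ≤ W₀ - 1
    · exact Or.inr (Or.inr hle)
    have hub : (ψ r v₀).natAbs ≤ W₀ := hℓι_ge v₀ r hr
    have heq : (ψ r v₀).natAbs = W₀ := by omega
    have hcase2 : ψ r v₀ = ψs v₀ ∨ ψ r v₀ = -ψs v₀ := by
      rw [hψs_v₀]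
      rcases Int.natAbs_eq (ψ r v₀) with h | h
      · left; rw [h, heq]
      · right; rw [h, heq]
    have hkey : ∀ δ : Additive ↥A →+ ℤ, δ = ψ r - ψs ∨ δ = ψ r + ψs → δ v₀ = 0 → δ = 0 := by
      intro δ hδ hδv
      by_contra hδne
      have hδL : δ ∈ L0 := by
        rcases hδ with rfl | rfl
        · rcases hψs_cases with h | h
          · rw [h]; exact hmemL_sub r hr rs hrs_mem
          · rw [h, sub_neg_eq_add]; exact hmemL_add r hr rs hrs_mem
        · rcases hψs_cases with h | h
          · rw [h]; exact hmemL_add r hr rs hrs_mem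
          · rw [h, ← sub_eq_add_neg]; exact hmemL_sub r hr rs hrs_mem
      exact (hv₀ δ hδL hδne) hδv
    rcases hcase2 with h | h
    · left
      have := hkey (ψ r - ψs) (Or.inl rfl) (by simp [h])
      have h2 : ψ r - ψs = 0 := this
      rw [sub_eq_zero] at h2
      exact h2
    · right; left
      have := hkey (ψ r + ψs) (Or.inr rfl) (by simp [h])
      have h2 : ψ r + ψs = 0 := this
      rw [add_eq_zero_iff_eq_neg] at h2
      exact h2
  -- the kernel of ψs is finitely generated
  haveI : IsNoetherian ℤ (Additive ↥A) := isNoetherian_of_isNoetherianRing_of_finite ℤ _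
  obtain ⟨κF, hκF⟩ : (AddSubgroup.toIntSubmodule ψs.ker).FG := IsNoetherian.noetherian _
  have hκF_ker : ∀ k ∈ κF, ψs k = 0 := by
    intro k hk
    have h1 : (k : Additive ↥A) ∈ Submodule.span ℤ (↑κF : Set (Additive ↥A)) :=
      Submodule.subset_span hk
    rw [hκF] at h1
    exact h1
  have hκF_gen : AddSubgroup.closure (↑κF : Set (Additive ↥A)) = ψs.ker := by
    have h1 := Submodule.span_int_eq_addSubgroupClosure (↑κF : Set (Additive ↥A))
    rw [hκF] at h1
    rw [← h1]
    rfl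
  -- constants
  obtain ⟨S0, hS0gen⟩ : ∃ S0 : Finset G, Subgroup.closure (↑S0 : Set G) = ⊤ := by
    obtain ⟨S, hSgen, hSfin⟩ := Group.fg_iff.mp ‹Group.FG G›
    exact ⟨hSfin.toFinset, by rw [Set.Finite.coe_toFinset]; exact hSgen⟩
  set Ssym : Finset G := S0 ∪ S0.image (·⁻¹) with hSsym
  have hSsym_sym : ∀ s ∈ Ssym, s⁻¹ ∈ Ssym := by
    intro s hs
    rw [hSsym, Finset.mem_union] at hs ⊢
    rcases hs with h | h
    · exact Or.inr (Finset.mem_image.mpr ⟨s, h, rfl⟩)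
    · obtain ⟨a, ha, rfl⟩ := Finset.mem_image.mp h
      exact Or.inl (by simpa using ha)
  have hSsym_gen : Subgroup.closure (↑Ssym : Set G) = ⊤ := by
    rw [eq_top_iff, ← hS0gen]
    apply Subgroup.closure_mono
    intro s hs
    rw [hSsym]
    exact_mod_cast Finset.mem_union_left _ hs
  set cκ : ℕ := κF.sup (fun m => ℓf (ι m)) with hcκ
  set cS : ℕ := Ssym.sup (fun s => ℓf (afun s)) with hcS
  set cβ : ℕ := R_fin.sup (fun r => R_fin.sup (fun r' => ℓf (r * r' * (rep (r * r'))⁻¹))) with hcβ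
  set P : ℕ := cβ with hP
  set N : ℕ := cκ + cS + P + 1 with hN
  have hN_pos : 1 ≤ N := by omega
  set vG : G := (ι v₀) ^ N with hvG
  have hvG_mem : vG ∈ A := pow_mem (hι_mem v₀) N
  set R : ℕ := N * W₀ with hR
  have hR_pos : 0 < R := by
    rw [hR]; exact Nat.mul_pos (by omega) hW₀_pos
  -- the weight function
  set ν : G → ℕ := fun x => ℓf (afun x) + (if x ∈ A then 0 else P) with hν
  have hν_A : ∀ {g : G}, g ∈ A → ν g = ℓf g := by
    intro g hg
    rw [hν]
    simp only [hafunA hg, if_pos hg, add_zero]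
  have hν_one : ν 1 = 0 := by rw [hν_A (one_mem A), hℓ_one]
  -- the cocycle is trivial when one side is in A
  have hβ1 : ∀ x y : G, x ∈ A → rep x * rep y * (rep (x * y))⁻¹ = 1 := by
    intro x y hx
    have h1 : rep (x * y) = rep y := by
      rw [hrep]
      apply VAProof.rep'_eq_of_eq
      rw [QuotientGroup.mk_mul, (QuotientGroup.eq_one_iff x).mpr hx, one_mul]
    rw [h1, hrepA hx, one_mul, mul_inv_cancel]
  have hβ2 : ∀ x y : G, y ∈ A → rep x * rep y * (rep (x * y))⁻¹ = 1 := by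
    intro x y hy
    have h1 : rep (x * y) = rep x := by
      rw [hrep]
      apply VAProof.rep'_eq_of_eq
      rw [QuotientGroup.mk_mul, (QuotientGroup.eq_one_iff y).mpr hy, mul_one]
    rw [h1, hrepA hy, mul_one, mul_inv_cancel]
  have hβ_mem : ∀ x y : G, rep x * rep y * (rep (x * y))⁻¹ ∈ A := by
    intro x y
    rw [← QuotientGroup.eq_one_iff (N := A)]
    rw [QuotientGroup.mk_mul, QuotientGroup.mk_mul, QuotientGroup.mk_inv]
    rw [hrep, VAProof.rep'_spec, VAProof.rep'_spec, VAProof.rep'_spec]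
    rw [← QuotientGroup.mk_mul, ← QuotientGroup.mk_inv, ← QuotientGroup.mk_mul]
    exact (QuotientGroup.eq_one_iff _).mpr (by
      rw [show x * y * (x * y)⁻¹ = 1 by group]; exact one_mem A)
  have hβ_le : ∀ x y : G, ℓf (rep x * rep y * (rep (x * y))⁻¹) ≤ cβ := by
    intro x y
    have h1 : rep (x * y) = rep (rep x * rep y) := by rw [hrep]; exact VAProof.rep'_mul A x y
    rw [h1]
    calc ℓf (rep x * rep y * (rep (rep x * rep y))⁻¹)
        ≤ R_fin.sup (fun r' => ℓf (rep x * r' * (rep (rep x * r'))⁻¹)) :=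
          Finset.le_sup (f := fun r' => ℓf (rep x * r' * (rep (rep x * r'))⁻¹)) (hmemR y)
      _ ≤ cβ :=
          Finset.le_sup (f := fun r => R_fin.sup (fun r' => ℓf (r * r' * (rep (r * r'))⁻¹))) (hmemR x)
  have hafun_decomp : ∀ x y : G,
      afun (x * y) = afun x * (rep x * afun y * (rep x)⁻¹) * (rep x * rep y * (rep (x * y))⁻¹) := by
    intro x y
    simp only [hafun]
    group
  have hℓ_afun_mul : ∀ x y : G,
      ℓf (afun (x * y)) ≤ ℓf (afun x) + ℓf (afun y) + ℓf (rep x * rep y * (rep (x * y))⁻¹) := by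
    intro x y
    rw [hafun_decomp x y]
    have m1 := hafun_mem x
    have m2 : rep x * afun y * (rep x)⁻¹ ∈ A := hconjA _ _ (hafun_mem y)
    have m3 := hβ_mem x y
    calc ℓf (afun x * (rep x * afun y * (rep x)⁻¹) * (rep x * rep y * (rep (x * y))⁻¹))
        ≤ ℓf (afun x * (rep x * afun y * (rep x)⁻¹)) + ℓf (rep x * rep y * (rep (x * y))⁻¹) :=
          hℓ_mul (mul_mem m1 m2) m3
      _ ≤ ℓf (afun x) + ℓf (rep x * afun y * (rep x)⁻¹) + ℓf (rep x * rep y * (rep (x * y))⁻¹) :=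
          Nat.add_le_add_right (hℓ_mul m1 m2) _
      _ = ℓf (afun x) + ℓf (afun y) + ℓf (rep x * rep y * (rep (x * y))⁻¹) := by
          rw [hℓ_conj (rep x) (afun y) (hafun_mem y)]
  have hνmul : ∀ x y : G, ν (x * y) ≤ ν x + ν y := by
    intro x y
    by_cases hx : x ∈ A
    · have hβ := hβ1 x y hx
      have h1 : ℓf (afun (x * y)) ≤ ℓf (afun x) + ℓf (afun y) := by
        have := hℓ_afun_mul x y
        rwa [hβ, hℓ_one, add_zero] at this
      by_cases hy : y ∈ A
      · have hxy : x * y ∈ A := mul_mem hx hy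
        rw [hν]
        simp only [if_pos hx, if_pos hy, if_pos hxy, add_zero]
        exact h1
      · have hxy : x * y ∉ A := fun h => hy (by
          have : y = x⁻¹ * (x * y) := by group
          rw [this]; exact mul_mem (inv_mem hx) h)
        rw [hν]
        simp only [if_pos hx, if_neg hy, if_neg hxy, add_zero]
        omega
    · by_cases hy : y ∈ A
      · have hβ := hβ2 x y hy
        have h1 : ℓf (afun (x * y)) ≤ ℓf (afun x) + ℓf (afun y) := by
          have := hℓ_afun_mul x y
          rwa [hβ, hℓ_one, add_zero] at this
        have hxy : x * y ∉ A := fun h => hx (by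
          have : x = (x * y) * y⁻¹ := by group
          rw [this]; exact mul_mem h (inv_mem hy))
        rw [hν]
        simp only [if_neg hx, if_pos hy, if_neg hxy, add_zero]
        omega
      · have h1 : ℓf (afun (x * y)) ≤ ℓf (afun x) + ℓf (afun y) + cβ :=
          le_trans (hℓ_afun_mul x y) (by
            have := hβ_le x y
            omega)
        rw [hν]
        simp only [if_neg hx, if_neg hy]
        have h2 : (if x * y ∈ A then 0 else P) ≤ P := by split_ifs <;> omega
        have hPc : P = cβ := hP
        omega
  -- the generating set
  set T : Set G := (↑Ssym : Set G) ∪ ({vG, vG⁻¹} ∪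
    ⋃ κ ∈ (↑κF : Set (Additive ↥A)), {ι κ * vG⁻¹, vG * (ι κ)⁻¹, (ι κ)⁻¹ * vG⁻¹, vG * ι κ}) with hT
  have hT_fin : T.Finite := by
    rw [hT]
    refine Set.Finite.union Ssym.finite_toSet (Set.Finite.union (Set.Finite.insert _ (Set.finite_singleton _)) ?_)
    refine Set.Finite.biUnion κF.finite_toSet fun κ _ => ?_
    exact Set.Finite.insert _ (Set.Finite.insert _ (Set.Finite.insert _ (Set.finite_singleton _)))
  have hT_sym : ∀ s ∈ T, s⁻¹ ∈ T := by
    intro s hs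
    rw [hT] at hs ⊢
    rcases hs with h | h
    · exact Or.inl (by exact_mod_cast hSsym_sym s (by exact_mod_cast h))
    · rcases h with h | h
      · rcases h with h | h
        · rw [h]; exact Or.inr (Or.inl (by simp))
        · rw [Set.mem_singleton_iff] at h
          rw [h, inv_inv]; exact Or.inr (Or.inl (by simp))
      · simp only [Set.mem_iUnion] at h
        obtain ⟨κ, hκ, hmem⟩ := h
        refine Or.inr (Or.inr ?_)
        simp only [Set.mem_iUnion]
        refine ⟨κ, hκ, ?_⟩
        simp only [Set.mem_insert_iff, Set.mem_singleton_iff] at hmem ⊢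
        rcases hmem with rfl | rfl | rfl | rfl
        · right; left; group
        · left; group
        · right; right; right; group
        · right; right; left; group
  have hT_gen : Subgroup.closure T = ⊤ := by
    rw [eq_top_iff, ← hSsym_gen]
    apply Subgroup.closure_mono
    rw [hT]
    exact Set.subset_union_left
  have hvGT : vG ∈ T := by rw [hT]; exact Or.inr (Or.inl (by simp))
  -- bounds on generators
  have hκF_bd : ∀ κ ∈ κF, ∀ r ∈ R_fin, (ψ r κ).natAbs ≤ cκ := by
    intro κ hκ r hr
    calc (ψ r κ).natAbs ≤ ℓf (ι κ) := hℓι_ge κ r hr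
      _ ≤ cκ := by rw [hcκ]; exact Finset.le_sup (f := fun m => ℓf (ι m)) hκ
  have hletter : ∀ mm : Additive ↥A, ψs mm = 0 → (∀ r ∈ R_fin, (ψ r mm).natAbs ≤ cκ) →
      ℓf (ι mm * vG⁻¹) ≤ R := by
    intro mm h0 hbd
    have hrw : ι mm * vG⁻¹ = ι (mm - (N : ℤ) • v₀) := by
      rw [sub_eq_add_neg, hι_add, hι_neg, hι_zsmul, zpow_natCast, hvG]
    rw [hrw]
    refine hℓ_le _ _ fun r hr => ?_
    rw [hterm_eq]
    have hval : ψ r (mm - (N : ℤ) • v₀) = ψ r mm - (N : ℤ) * ψ r v₀ := by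
      rw [map_sub, map_zsmul, smul_eq_mul]
    rw [hval]
    rcases hmargin r hr with h | h | h
    · rw [h, h0, hψs_v₀]
      simp only [zero_sub, Int.natAbs_neg]
      rw [show (N : ℤ) * (W₀ : ℤ) = ((N * W₀ : ℕ) : ℤ) by push_cast; ring, Int.natAbs_natCast]
    · rw [h]
      simp only [AddMonoidHom.neg_apply]
      rw [show -ψs mm - (N : ℤ) * -ψs v₀ = (N : ℤ) * ψs v₀ - ψs mm by ring, h0, hψs_v₀]
      simp only [sub_zero]
      rw [show (N : ℤ) * (W₀ : ℤ) = ((N * W₀ : ℕ) : ℤ) by push_cast; ring, Int.natAbs_natCast]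
    · have h1 := hbd r hr
      have h2 : (ψ r mm - (N : ℤ) * ψ r v₀).natAbs
          ≤ (ψ r mm).natAbs + N * (ψ r v₀).natAbs := by
        calc (ψ r mm - (N : ℤ) * ψ r v₀).natAbs
            ≤ (ψ r mm).natAbs + ((N : ℤ) * ψ r v₀).natAbs := Int.natAbs_sub_le _ _
          _ = (ψ r mm).natAbs + N * (ψ r v₀).natAbs := by
              rw [Int.natAbs_mul, Int.natAbs_natCast]
      have h3 : N * (ψ r v₀).natAbs ≤ N * (W₀ - 1) := Nat.mul_le_mul_left N h
      have h4 : N * (W₀ - 1) + N = N * W₀ := by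
        have hW : W₀ - 1 + 1 = W₀ := by omega
        calc N * (W₀ - 1) + N = N * (W₀ - 1 + 1) := by ring
          _ = N * W₀ := by rw [hW]
      have h5 : cκ ≤ N := by rw [hN]; omega
      rw [hR]
      omega
  have hν_T : ∀ t ∈ T, ν t ≤ R := by
    intro t ht
    rw [hT] at ht
    rcases ht with h | h
    · have h1 : ℓf (afun t) ≤ cS := by
        rw [hcS]; exact Finset.le_sup (f := fun s => ℓf (afun s)) (by exact_mod_cast h)
      have h2 : ν t ≤ ℓf (afun t) + P := by simp only [hν]; split_ifs <;> omega
      have h3 : cS + P ≤ N := by rw [hN]; omega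
      have h4 : N ≤ N * W₀ := Nat.le_mul_of_pos_right N hW₀_pos
      rw [hR]
      omega
    · rcases h with h | h
      · rcases h with h | h
        · rw [h, hν_A hvG_mem, hvG, hℓ_pow (hι_mem v₀) N]
        · rw [Set.mem_singleton_iff] at h
          rw [h, hν_A (inv_mem hvG_mem), hℓ_inv hvG_mem, hvG, hℓ_pow (hι_mem v₀) N]
      · simp only [Set.mem_iUnion] at h
        obtain ⟨κ, hκ, hmem⟩ := h
        have hκ' : κ ∈ κF := by exact_mod_cast hκ
        have hb1 : ℓf (ι κ * vG⁻¹) ≤ R :=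
          hletter κ (hκF_ker κ hκ') (hκF_bd κ hκ')
        have hb2 : ℓf (ι (-κ) * vG⁻¹) ≤ R := by
          refine hletter (-κ) (by rw [map_neg, hκF_ker κ hκ', neg_zero]) fun r hr => ?_
          rw [map_neg, Int.natAbs_neg]
          exact hκF_bd κ hκ' r hr
        have hmemA1 : ι κ * vG⁻¹ ∈ A := mul_mem (hι_mem κ) (inv_mem hvG_mem)
        have hmemA2 : ι (-κ) * vG⁻¹ ∈ A := mul_mem (hι_mem (-κ)) (inv_mem hvG_mem)
        simp only [Set.mem_insert_iff, Set.mem_singleton_iff] at hmem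
        rcases hmem with rfl | rfl | rfl | rfl
        · rw [hν_A hmemA1]; exact hb1
        · have he : vG * (ι κ)⁻¹ = (ι κ * vG⁻¹)⁻¹ := by group
          rw [he, hν_A (inv_mem hmemA1), hℓ_inv hmemA1]
          exact hb1
        · have he : (ι κ)⁻¹ * vG⁻¹ = ι (-κ) * vG⁻¹ := by rw [hι_neg]
          rw [he, hν_A hmemA2]
          exact hb2
        · have he : vG * ι κ = (ι (-κ) * vG⁻¹)⁻¹ := by rw [hι_neg]; group
          rw [he, hν_A (inv_mem hmemA2), hℓ_inv hmemA2]
          exact hb2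
  -- exact length of powers of vG
  have hν_vpow : ∀ m : ℕ, ν (vG ^ m) = m * R := by
    intro m
    rw [hν_A (pow_mem hvG_mem m), hvG, ← pow_mul, hℓ_pow (hι_mem v₀) (N * m), hR, hW₀]
    ring
  have hlen : ∀ m : ℕ, wordLength T (vG ^ m) = m := by
    intro m
    apply le_antisymm
    · have := VAProof.wl_le_of_list (S := T) (List.replicate m vG)
        (by intro s hs; rw [List.eq_of_mem_replicate hs]; exact hvGT)
        (by rw [List.prod_replicate])
      simpa using this
    · have h1 := VAProof.nu_le_wl hT_sym hT_gen ν hν_one hνmul hν_T (vG ^ m)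
      rw [hν_vpow] at h1
      have h2 : R * m ≤ R * wordLength T (vG ^ m) := by
        rw [mul_comm R m]; exact h1
      exact Nat.le_of_mul_le_mul_left h2 hR_pos
  -- the kernel translates
  set Kset : Set G := {g | ∃ mm : Additive ↥A, ψs mm = 0 ∧ g = ι mm} with hKset
  have hKcomm : ∀ b ∈ Kset, Commute vG b := by
    rintro b ⟨mm, _, rfl⟩
    exact hcommA vG (ι mm) hvG_mem (hι_mem mm)
  have hKinv : ∀ b ∈ Kset, b⁻¹ ∈ Kset := by
    rintro b ⟨mm, hmm, rfl⟩
    exact ⟨-mm, by rw [map_neg, hmm, neg_zero], (hι_neg mm).symm⟩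
  have hKer_list : ∀ mm : Additive ↥A, ψs mm = 0 → ∃ l : List (Additive ↥A),
      (∀ yy ∈ l, yy ∈ (↑κF : Set (Additive ↥A)) ∪ -(↑κF : Set (Additive ↥A))) ∧ l.sum = mm := by
    intro mm hmm
    have h1 : mm ∈ AddSubgroup.closure (↑κF : Set (Additive ↥A)) := by
      rw [hκF_gen]; exact hmm
    have h2 : mm ∈ AddSubmonoid.closure ((↑κF : Set (Additive ↥A)) ∪ -(↑κF : Set (Additive ↥A))) := by
      rw [← AddSubgroup.closure_toAddSubmonoid]; exact h1
    exact AddSubmonoid.exists_list_of_mem_closure h2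
  have hKword : ∀ b ∈ Kset, ∃ k : ℕ, wordLength T (b * (vG ^ k)⁻¹) ≤ k := by
    rintro b ⟨mm, hmm0, rfl⟩
    obtain ⟨l, hl_mem, hl_sum⟩ := hKer_list mm hmm0
    refine ⟨l.length, ?_⟩
    rw [← hl_sum]
    clear hl_sum hmm0
    induction l with
    | nil =>
      simp only [List.sum_nil, List.length_nil, pow_zero, inv_one, mul_one, hι_zero]
      rw [VAProof.wl_one]
    | cons yy l ih =>
      have hyyT : ι yy * vG⁻¹ ∈ T := by
        rcases hl_mem yy (List.mem_cons_self) with h | h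
        · rw [hT]
          refine Or.inr (Or.inr ?_)
          simp only [Set.mem_iUnion]
          exact ⟨yy, h, by simp⟩
        · rw [Set.mem_neg] at h
          rw [hT]
          refine Or.inr (Or.inr ?_)
          simp only [Set.mem_iUnion]
          refine ⟨-yy, h, ?_⟩
          have : ι yy = (ι (-yy))⁻¹ := by rw [hι_neg, inv_inv]
          rw [this]
          simp
      have hcm : ι l.sum * vG⁻¹ = vG⁻¹ * ι l.sum := by
        have h1 : Commute vG (ι l.sum) := hcommA vG (ι l.sum) hvG_mem (hι_mem _)
        exact h1.inv_left.symm.eq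
      have hid : ι ((yy :: l).sum) * (vG ^ ((yy :: l).length))⁻¹
          = (ι yy * vG⁻¹) * (ι l.sum * (vG ^ l.length)⁻¹) := by
        rw [List.sum_cons, List.length_cons, hι_add, pow_succ]
        calc ι yy * ι l.sum * (vG ^ l.length * vG)⁻¹
            = ι yy * ((ι l.sum * vG⁻¹) * (vG ^ l.length)⁻¹) := by group
          _ = ι yy * ((vG⁻¹ * ι l.sum) * (vG ^ l.length)⁻¹) := by rw [hcm]
          _ = (ι yy * vG⁻¹) * (ι l.sum * (vG ^ l.length)⁻¹) := by group
      calc wordLength T (ι ((yy :: l).sum) * (vG ^ ((yy :: l).length))⁻¹)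
          ≤ wordLength T (ι yy * vG⁻¹) + wordLength T (ι l.sum * (vG ^ l.length)⁻¹) := by
            rw [hid]; exact VAProof.wl_mul_le hT_sym hT_gen _ _
        _ ≤ 1 + l.length := Nat.add_le_add (VAProof.wl_le_one hyyT)
            (ih (fun yy' hyy' => hl_mem yy' (List.mem_cons_of_mem yy hyy')))
        _ = (yy :: l).length := by rw [List.length_cons]; omega
  -- the finite transversal and the decomposition
  haveI : NeZero R := ⟨hR_pos.ne'⟩
  set τ : ZMod R → Additive ↥A := fun ρ =>
    if h : ∃ mm : Additive ↥A, ((ψs mm : ℤ) : ZMod R) = ρ then h.choose else 0 with hτ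
  set Y : Set G := (fun p : ZMod R × G => ι (τ p.1) * p.2) '' (Set.univ ×ˢ (↑R_fin : Set G)) with hYdef
  have hYfin : Y.Finite := ((Set.finite_univ).prod R_fin.finite_toSet).image _
  have hdec : ∀ x : G, ∃ (t : ℤ) (b : G), b ∈ Kset ∧ ∃ y ∈ Y, x⁻¹ = vG ^ t * b * y := by
    intro x
    set w := x⁻¹ with hw
    set mm : Additive ↥A := Additive.ofMul (⟨afun w, hafun_mem w⟩ : ↥A) with hmm
    have hιmm : ι mm = afun w := rfl
    set ρ : ZMod R := ((ψs mm : ℤ) : ZMod R) with hρ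
    have hτρ : ((ψs (τ ρ) : ℤ) : ZMod R) = ρ := by
      have hex : ∃ mm' : Additive ↥A, ((ψs mm' : ℤ) : ZMod R) = ρ := ⟨mm, rfl⟩
      rw [hτ]
      simp only [dif_pos hex]
      exact hex.choose_spec
    have hdvd : ((R : ℕ) : ℤ) ∣ (ψs mm - ψs (τ ρ)) := by
      rw [← ZMod.intCast_zmod_eq_zero_iff_dvd]
      rw [Int.cast_sub]
      rw [show ((ψs mm : ℤ) : ZMod R) = ρ from rfl, hτρ, sub_self]
    obtain ⟨t, ht⟩ := hdvd
    set mb : Additive ↥A := mm - τ ρ - t • ((N : ℤ) • v₀) with hmb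
    have hψs_mb : ψs mb = 0 := by
      rw [hmb, map_sub, map_sub, map_zsmul, map_zsmul, hψs_v₀, smul_eq_mul, smul_eq_mul]
      rw [show ψs mm - ψs (τ ρ) = ((R : ℕ) : ℤ) * t from ht]
      rw [hR]
      push_cast
      ring
    have hyY : ι (τ ρ) * rep w ∈ Y := by
      rw [hYdef]
      exact ⟨(ρ, rep w), ⟨Set.mem_univ _, by
        simp only [Set.mem_prod]
        exact_mod_cast hmemR w⟩, rfl⟩
    refine ⟨t, ι mb, ⟨mb, hψs_mb, rfl⟩, ι (τ ρ) * rep w, hyY, ?_⟩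
    have h1 : w = ι mm * rep w := by
      rw [hιmm]
      simp only [hafun]
      group
    have h3 : ι (t • ((N : ℤ) • v₀)) = vG ^ t := by
      rw [smul_smul, hι_zsmul, show t * (N : ℤ) = (N : ℤ) * t by ring, zpow_mul, zpow_natCast, hvG]
    have h2 : mm = t • ((N : ℤ) • v₀) + mb + τ ρ := by rw [hmb]; abel
    calc x⁻¹ = ι mm * rep w := h1
      _ = ι (t • ((N : ℤ) • v₀) + mb + τ ρ) * rep w := by rw [← h2]
      _ = ι (t • ((N : ℤ) • v₀)) * ι mb * (ι (τ ρ) * rep w) := by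
          rw [hι_add, hι_add]; group
      _ = vG ^ t * ι mb * (ι (τ ρ) * rep w) := by rw [h3]
  obtain ⟨f, hf1, hf2⟩ := VAProof.main_abstract T hT_sym hT_gen vG hvGT hlen Kset
    hKcomm hKinv hKword Y hYfin hdec
  exact ⟨T, ⟨hT_fin, hT_sym, hT_gen⟩, f, hf1, hf2⟩
end

section
/- Let d be an integer-valued, proper, geodesic metric on a set X with base point x₀. Suppose (x_n) is a sequence in X with d(x_n,x₀) → ∞ such that the Busemann functions b_{x_n} converge pointwise to a function f : X → ℝ. Then for every natural number r there exists x ∈ X with d(x,x₀) = r and f(x) = −r. In particular, f is unbounded from below. -/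
open Filter Topology

/-- For an integer-valued proper geodesic metric `d` on `X` with
base point `x₀` and a sequence `xₙ` with `d(xₙ,x₀) → ∞` whose Busemann functions
converge pointwise to `f`, for every `r : ℕ` there is `x` with `d(x,x₀) = r` and
`f(x) = -r`; in particular `f` is unbounded from below. -/
theorem metric_functional_unbounded_below_of_geodesic
    {X : Type*} (d : X → X → ℝ) (x₀ : X)
    (hmet : IsMetric d)
    (hint : ∀ x y : X, ∃ n : ℕ, d x y = n)
    (hproper : ∀ r : ℝ, {x : X | d x x₀ ≤ r}.Finite)
    (hgeo : ∀ x y : X, ∃ n : ℕ, ∃ z : ℕ → X, z 0 = x ∧ z n = y ∧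
      ∀ j k : ℕ, j ≤ n → k ≤ n → d (z j) (z k) = |(j : ℝ) - (k : ℝ)|)
    (u : ℕ → X) (hu : Tendsto (fun n => d (u n) x₀) atTop atTop)
    (f : X → ℝ)
    (hconv : ∀ y : X,
      Tendsto (fun n => d (u n) y - d (u n) x₀) atTop (𝓝 (f y))) :
    (∀ r : ℕ, ∃ x : X, d x x₀ = (r : ℝ) ∧ f x = -(r : ℝ)) ∧
      ¬ BddBelow (Set.range f) := by
  classical
  have hsymm := hmet.2.2.1
  have key : ∀ r : ℕ, ∃ x : X, d x x₀ = (r : ℝ) ∧ f x = -(r : ℝ) := by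
    intro r
    have hc : ∀ n : ℕ, ∃ x : X, (r : ℝ) ≤ d (u n) x₀ →
        d x x₀ = (r : ℝ) ∧ d (u n) x = d (u n) x₀ - (r : ℝ) := by
      intro n
      by_cases h : (r : ℝ) ≤ d (u n) x₀
      · obtain ⟨m, z, hz0, hzm, hz⟩ := hgeo x₀ (u n)
        have hm : d (u n) x₀ = (m : ℝ) := by
          rw [hsymm]
          have h0 := hz 0 m (Nat.zero_le _) le_rfl
          rw [hz0, hzm] at h0
          rw [h0]
          simp [abs_of_nonpos]
        have hrm : r ≤ m := by
          rw [hm] at h; exact_mod_cast h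
        refine ⟨z r, fun _ => ⟨?_, ?_⟩⟩
        · have h1 := hz r 0 hrm (Nat.zero_le _)
          rw [hz0] at h1; rw [h1]; simp
        · have h2 := hz m r le_rfl hrm
          rw [hzm] at h2
          rw [h2, hm, abs_of_nonneg (sub_nonneg.mpr (by exact_mod_cast hrm))]
      · exact ⟨x₀, fun hr => absurd hr h⟩
    choose g hg using hc
    obtain ⟨N, hN⟩ := Filter.eventually_atTop.mp (hu.eventually_ge_atTop (r : ℝ))
    have hmem : ∀ k : ℕ, d (g (k + N)) x₀ ≤ (r : ℝ) := fun k =>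
      le_of_eq (hg (k + N) (hN _ (Nat.le_add_left N k))).1
    haveI : Finite ↥{x : X | d x x₀ ≤ (r : ℝ)} := (hproper r).to_subtype
    obtain ⟨y, hy⟩ := Finite.exists_infinite_fiber
      (fun k : ℕ => (⟨g (k + N), hmem k⟩ : {x : X | d x x₀ ≤ (r : ℝ)}))
    set p : ℕ → Prop := fun k => g (k + N) = (y : X) with hp_def
    have hp : (setOf p).Infinite := by
      rw [← Set.infinite_coe_iff]
      refine Set.infinite_coe_iff.mpr ?_
      have := Set.infinite_coe_iff.mp hy
      refine this.mono fun k hk => ?_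
      simp only [Set.mem_preimage, Set.mem_singleton_iff] at hk
      exact congrArg Subtype.val hk
    have hspec : ∀ k : ℕ, d (g (Nat.nth p k + N)) x₀ = (r : ℝ) ∧
        d (u (Nat.nth p k + N)) (g (Nat.nth p k + N)) =
          d (u (Nat.nth p k + N)) x₀ - (r : ℝ) :=
      fun k => hg _ (hN _ (Nat.le_add_left N _))
    have hpk : ∀ k : ℕ, g (Nat.nth p k + N) = (y : X) :=
      fun k => Nat.nth_mem_of_infinite hp k
    have t1 : Tendsto (fun k : ℕ => Nat.nth p k + N) atTop atTop :=
      tendsto_atTop_mono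
        (fun k => le_trans ((Nat.nth_strictMono hp).le_apply) (Nat.le_add_right _ N))
        tendsto_id
    have h1 : Tendsto (fun k : ℕ => d (u (Nat.nth p k + N)) (y : X) -
        d (u (Nat.nth p k + N)) x₀) atTop (𝓝 (f (y : X))) := (hconv (y : X)).comp t1
    have h2 : ∀ k : ℕ, d (u (Nat.nth p k + N)) (y : X) -
        d (u (Nat.nth p k + N)) x₀ = -(r : ℝ) := by
      intro k
      have := (hspec k).2
      rw [hpk k] at this
      rw [this]; ring
    have h3 : Tendsto (fun k : ℕ => d (u (Nat.nth p k + N)) (y : X) -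
        d (u (Nat.nth p k + N)) x₀) atTop (𝓝 (-(r : ℝ))) := by
      simpa [funext h2] using (tendsto_const_nhds : Tendsto (fun _ : ℕ => -(r : ℝ)) atTop _)
    refine ⟨(y : X), ?_, tendsto_nhds_unique h1 h3⟩
    have := (hspec 0).1
    rwa [hpk 0] at this
  refine ⟨key, fun hb => ?_⟩
  obtain ⟨B, hB⟩ := hb
  obtain ⟨r, hr⟩ := exists_nat_gt (-B)
  obtain ⟨x, -, hx⟩ := key r
  have hBx : B ≤ f x := hB (Set.mem_range_self x)
  rw [hx] at hBx
  linarith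
end

section
/- Let G be a finitely generated infinite group and π : G → H a surjective group homomorphism onto an infinite group H. Let d_G be a word metric on G with respect to a finite symmetric generating set and d_H a word metric on H with respect to a finite symmetric generating set, with |x|_G = d_G(x,1) and |q|_H = d_H(q,1). Assume there exists C ≥ 1 such that |π(x)|_H ≤ C·|x|_G for every x ∈ G, and such that for every q ∈ H there exists x ∈ G with π(x) = q and |x|_G ≤ C·|q|_H. Fix an integer M > C and define D(x,y) = max{ d_G(x,y), M·d_H(π(x),π(y)) }. Then D is a Banach metric on G. -/
open Filter Topology

section WL
variable {G : Type*} [Group G] {S : Set G}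

lemma fsg_exists_list (hS : FinSymGen S) (x : G) :
    ∃ l : List G, (∀ s ∈ l, s ∈ S) ∧ l.prod = x := by
  have hx : x ∈ Subgroup.closure S := by rw [hS.2.2]; trivial
  induction hx using Subgroup.closure_induction with
  | mem s hs => exact ⟨[s], by simpa using hs, by simp⟩
  | one => exact ⟨[], by simp, by simp⟩
  | mul a b _ _ ha hb =>
      obtain ⟨l1, hl1, hp1⟩ := ha; obtain ⟨l2, hl2, hp2⟩ := hb
      refine ⟨l1 ++ l2, ?_, by simp [hp1, hp2]⟩
      intro s hs; rcases List.mem_append.1 hs with h | h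
      exacts [hl1 s h, hl2 s h]
  | inv a _ ha =>
      obtain ⟨l, hl, hp⟩ := ha
      refine ⟨(l.map fun y => y⁻¹).reverse, ?_, ?_⟩
      · intro s hs
        simp only [List.mem_reverse, List.mem_map] at hs
        obtain ⟨y, hy, rfl⟩ := hs; exact hS.2.1 y (hl y hy)
      · rw [← List.prod_inv_reverse, hp]

lemma wordLength_le_list (l : List G) (hl : ∀ s ∈ l, s ∈ S) :
    wordLength S l.prod ≤ l.length :=
  Nat.sInf_le ⟨l, hl, rfl, rfl⟩

lemma wordLength_spec (hS : FinSymGen S) (x : G) :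
    ∃ l : List G, (∀ s ∈ l, s ∈ S) ∧ l.length = wordLength S x ∧ l.prod = x := by
  obtain ⟨l, hl, hp⟩ := fsg_exists_list hS x
  have : {n : ℕ | ∃ l : List G, (∀ s ∈ l, s ∈ S) ∧ l.length = n ∧ l.prod = x}.Nonempty :=
    ⟨l.length, l, hl, rfl, hp⟩
  exact Nat.sInf_mem this

lemma wordLength_one : wordLength S (1 : G) = 0 :=
  Nat.le_zero.1 (wordLength_le_list ([] : List G) (by simp))

lemma wordLength_mul_le (hS : FinSymGen S) (x y : G) :
    wordLength S (x * y) ≤ wordLength S x + wordLength S y := by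
  obtain ⟨l1, hl1, hlen1, hp1⟩ := wordLength_spec hS x
  obtain ⟨l2, hl2, hlen2, hp2⟩ := wordLength_spec hS y
  have := wordLength_le_list (S := S) (l1 ++ l2) (by
    intro s hs; rcases List.mem_append.1 hs with h | h; exacts [hl1 s h, hl2 s h])
  simpa [hp1, hp2, hlen1, hlen2] using this

lemma wordLength_inv (hS : FinSymGen S) (x : G) :
    wordLength S x⁻¹ = wordLength S x := by
  have key : ∀ z : G, wordLength S z⁻¹ ≤ wordLength S z := by
    intro z
    obtain ⟨l, hl, hlen, hp⟩ := wordLength_spec hS z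
    have := wordLength_le_list (S := S) ((l.map fun y => y⁻¹).reverse) (by
      intro s hs
      simp only [List.mem_reverse, List.mem_map] at hs
      obtain ⟨y, hy, rfl⟩ := hs; exact hS.2.1 y (hl y hy))
    rw [← List.prod_inv_reverse, hp] at this
    simpa [hlen] using this
  exact le_antisymm (key x) (by simpa using key x⁻¹)

lemma wordLength_eq_zero (hS : FinSymGen S) {x : G} (h : wordLength S x = 0) : x = 1 := by
  obtain ⟨l, _, hlen, hp⟩ := wordLength_spec hS x
  rw [h, List.length_eq_zero_iff] at hlen
  simp [hlen] at hp; exact hp.symm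

lemma wordLength_split (hS : FinSymGen S) (x : G) (i : ℕ) (hi : i ≤ wordLength S x) :
    ∃ z : G, wordLength S z ≤ i ∧ wordLength S (z⁻¹ * x) ≤ wordLength S x - i := by
  obtain ⟨l, hl, hlen, hp⟩ := wordLength_spec hS x
  refine ⟨(l.take i).prod, ?_, ?_⟩
  · have := wordLength_le_list (S := S) (l.take i)
      (fun s hs => hl s (List.mem_of_mem_take hs))
    simpa [List.length_take, hlen, min_eq_left hi] using this
  · have hd : ((l.take i).prod)⁻¹ * x = (l.drop i).prod := by
      rw [← hp, ← List.take_append_drop i l, List.prod_append]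
      group
      rw [List.take_append_drop]
      simp [← List.prod_append]
    rw [hd]
    have := wordLength_le_list (S := S) (l.drop i)
      (fun s hs => hl s (List.mem_of_mem_drop hs))
    simpa [List.length_drop, hlen] using this

lemma wordLength_ball_finite (hS : FinSymGen S) (n : ℕ) :
    {x : G | wordLength S x ≤ n}.Finite := by
  induction n with
  | zero =>
      refine Set.Finite.subset (Set.finite_singleton 1) ?_
      intro x hx
      simp only [Set.mem_setOf_eq, Nat.le_zero] at hx
      simp [wordLength_eq_zero hS hx]
  | succ n ih =>
      refine Set.Finite.subset (Set.Finite.image2 (fun a b => a * b) ih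
        (hS.1.insert 1)) ?_
      intro x hx
      simp only [Set.mem_setOf_eq] at hx
      obtain ⟨l, hl, hlen, hp⟩ := wordLength_spec hS x
      rcases List.eq_nil_or_concat l with rfl | ⟨l', a, rfl⟩
      · exact ⟨1, by simpa [wordLength_one] using (Nat.zero_le n), 1, Set.mem_insert 1 S,
          by simp [← hp]⟩
      · refine ⟨l'.prod, ?_, a, Set.mem_insert_of_mem _ (hl a (by simp)), by simp [← hp]⟩
      -- wordLength l'.prod ≤ n
        have h1 := wordLength_le_list (S := S) l' (fun s hs => hl s (by simp [hs]))
        have : l'.length ≤ n := by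
          have h2 : (l'.concat a).length = l'.length + 1 := by simp
          omega
        exact le_trans h1 this

end WL
section Main

variable {G : Type*} [Group G] {S : Set G}

lemma wordDist_one (hS : FinSymGen S) (x : G) :
    wordDist S x 1 = (wordLength S x : ℝ) := by
  simp [wordDist, wordLength_inv hS]

lemma wordDist_rev (hS : FinSymGen S) (x y : G) :
    wordDist S x y = (wordLength S (y⁻¹ * x) : ℝ) := by
  unfold wordDist
  rw [← wordLength_inv hS]
  simp [mul_inv_rev]

lemma wordDist_nonneg (x y : G) : 0 ≤ wordDist S x y := Nat.cast_nonneg _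

lemma wordDist_self (x : G) : wordDist S x x = 0 := by
  simp [wordDist, wordLength_one]

lemma wordDist_symm (hS : FinSymGen S) (x y : G) : wordDist S x y = wordDist S y x := by
  rw [wordDist_rev hS]; rfl

lemma wordDist_triangle (hS : FinSymGen S) (x y z : G) :
    wordDist S x z ≤ wordDist S x y + wordDist S y z := by
  unfold wordDist
  have : x⁻¹ * z = (x⁻¹ * y) * (y⁻¹ * z) := by group
  rw [this]
  exact_mod_cast wordLength_mul_le hS _ _

lemma wordDist_eq_zero (hS : FinSymGen S) {x y : G} (h : wordDist S x y = 0) : x = y := by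
  unfold wordDist at h
  have : wordLength S (x⁻¹ * y) = 0 := by exact_mod_cast h
  have := wordLength_eq_zero hS this
  rw [inv_mul_eq_one] at this; exact this

end Main

set_option maxHeartbeats 2000000

/-- Combining a word metric on `G` with (M times) a word metric
on a quotient `H` via a maximum yields a Banach metric on `G`. -/
theorem max_word_metric_isBanachMetric
    {G H : Type*} [Group G] [Group H] [Infinite G] [Infinite H]
    (π : G →* H) (hπ : Function.Surjective π)
    (S : Set G) (hS : FinSymGen S) (T : Set H) (hT : FinSymGen T)
    (C : ℝ) (hC : 1 ≤ C)
    (h1 : ∀ x : G, (wordLength T (π x) : ℝ) ≤ C * (wordLength S x : ℝ))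
    (h2 : ∀ q : H, ∃ x : G, π x = q ∧ (wordLength S x : ℝ) ≤ C * (wordLength T q : ℝ))
    (M : ℤ) (hM : C < (M : ℝ)) :
    IsBanachMetric
      (fun x y : G => max (wordDist S x y) ((M : ℝ) * wordDist T (π x) (π y))) := by
  have hC0 : (0:ℝ) < C := lt_of_lt_of_le one_pos hC
  have hM1 : (1:ℝ) ≤ (M:ℝ) := hC.trans hM.le
  have hM0 : (0:ℝ) < (M:ℝ) := lt_of_lt_of_le one_pos hM1
  set d : G → G → ℝ := fun x y : G => max (wordDist S x y) ((M : ℝ) * wordDist T (π x) (π y))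
    with hd
  -- basic facts about `d`
  have hd_nonneg : ∀ x y : G, 0 ≤ d x y := fun x y =>
    le_trans (wordDist_nonneg x y) (le_max_left _ _)
  have hd_fst : ∀ x y : G, wordDist S x y ≤ d x y := fun x y => le_max_left _ _
  have hd_snd : ∀ x y : G, (M:ℝ) * wordDist T (π x) (π y) ≤ d x y := fun x y => le_max_right _ _
  have hquot : ∀ x y : G, wordDist T (π x) (π y) ≤ C * wordDist S x y := by
    intro x y
    have := h1 (x⁻¹ * y)
    simpa [wordDist, map_mul, map_inv] using this
  have hd_le : ∀ x y : G, d x y ≤ (M:ℝ) * C * wordDist S x y := by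
    intro x y
    have h1' : (1:ℝ) ≤ (M:ℝ)*C := by nlinarith
    refine max_le ?_ ?_
    · exact le_mul_of_one_le_left (wordDist_nonneg x y) h1'
    · have := hquot x y
      rw [mul_assoc]
      nlinarith
  have hd_one : ∀ x : G, d x 1 = max (wordLength S x : ℝ) ((M:ℝ) * (wordLength T (π x) : ℝ)) := by
    intro x
    rw [hd]
    simp only [map_one]
    rw [wordDist_one hS, wordDist_one hT]
  refine ⟨⟨hd_nonneg, ?_, ?_, ?_⟩, ?_, ?_, ?_, ?_, ?_⟩
  · -- vanishing iff
    intro x y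
    constructor
    · intro hxy
      have h1' : wordDist S x y ≤ 0 := hxy ▸ hd_fst x y
      exact wordDist_eq_zero hS (le_antisymm h1' (wordDist_nonneg x y))
    · rintro rfl
      simp [hd, wordDist_self]
  · -- symmetry
    intro x y
    simp only [hd]
    rw [wordDist_symm hS, wordDist_symm hT]
  · -- triangle
    intro x y z
    simp only [hd]
    refine max_le ?_ ?_
    · calc wordDist S x z ≤ wordDist S x y + wordDist S y z := wordDist_triangle hS x y z
        _ ≤ _ := add_le_add (le_max_left _ _) (le_max_left _ _)
    · calc (M:ℝ) * wordDist T (π x) (π z)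
          ≤ (M:ℝ) * (wordDist T (π x) (π y) + wordDist T (π y) (π z)) := by
            have := wordDist_triangle hT (π x) (π y) (π z); nlinarith
        _ = (M:ℝ) * wordDist T (π x) (π y) + (M:ℝ) * wordDist T (π y) (π z) := by ring
        _ ≤ _ := add_le_add (le_max_right _ _) (le_max_right _ _)
  · -- integer valued
    intro x y
    refine ⟨max (wordLength S (x⁻¹ * y)) (M.toNat * wordLength T ((π x)⁻¹ * (π y))), ?_⟩
    have hMt : ((M.toNat : ℕ) : ℝ) = (M : ℝ) := by
      rw [← Int.cast_natCast, Int.toNat_of_nonneg (by exact_mod_cast hM0.le)]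
    simp only [hd, wordDist]
    push_cast [Nat.cast_max]
    rw [hMt]
  · -- left invariance
    intro x y z
    simp only [hd, wordDist]
    have e1 : (z * x)⁻¹ * (z * y) = x⁻¹ * y := by group
    have e2 : (π (z * x))⁻¹ * (π (z * y)) = (π x)⁻¹ * (π y) := by
      rw [map_mul, map_mul]; group
    rw [e1, e2]
  · -- properness
    intro r
    refine Set.Finite.subset (wordLength_ball_finite hS ⌊r⌋₊) ?_
    intro x hx
    simp only [Set.mem_setOf_eq] at hx ⊢
    have h1' : (wordLength S x : ℝ) ≤ r := by
      have := le_trans (hd_fst x 1) hx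
      rwa [wordDist_one hS] at this
    exact Nat.le_floor h1'
  · -- quasi-isometric to Cayley graph
    refine ⟨S, hS, id, (M:ℝ) * C, by positivity, ?_, ?_⟩
    · intro y
      exact ⟨y, by simp [wordDist_self]; positivity⟩
    · intro x y
      simp only [id]
      constructor
      · have h' := hd_le x y
        have hMC : (0:ℝ) < (M:ℝ) * C := by positivity
        have : ((M:ℝ) * C)⁻¹ * d x y ≤ wordDist S x y := by
          rw [inv_mul_le_iff₀ hMC]; linarith [hd_le x y]
        linarith
      · have := hd_fst x y
        have h0 := hd_nonneg x y
        have h1' : (1:ℝ) ≤ (M:ℝ)*C := by nlinarith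
        have := le_mul_of_one_le_left h0 h1'
        nlinarith
  · -- all metric functionals unbounded
    intro h hIn hbdd
    obtain ⟨B, hB⟩ := hbdd
    obtain ⟨⟨u, hu⟩, hnb⟩ := hIn
    -- h 1 = 0, so 0 ≤ B
    have hh1 : h 1 = 0 := by
      have h0 : Filter.Tendsto (fun n => bus d (u n) 1) Filter.atTop (nhds 0) := by
        have : (fun n => bus d (u n) 1) = fun _ => (0:ℝ) := by
          funext n; simp [bus]
        rw [this]; exact tendsto_const_nhds
      exact tendsto_nhds_unique (hu 1) h0
    have hB0 : 0 ≤ B := by have := hB 1; rw [hh1] at this; simpa using this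
    -- Step 0 : D (u n) 1 → ∞
    have hDtop : Filter.Tendsto (fun n => d (u n) 1) Filter.atTop Filter.atTop := by
      by_contra hcon
      rw [Filter.tendsto_atTop] at hcon
      push_neg at hcon
      obtain ⟨b, hb⟩ := hcon
      have hbinf : {n : ℕ | d (u n) 1 < b}.Infinite := by
        rw [← Nat.frequently_atTop_iff_infinite]
        exact hb.mono (fun n hn => hn)
      -- pigeonhole into a finite ball
      have hfib : ∃ x : G, {n : ℕ | d (u n) 1 < b ∧ u n = x}.Infinite := by
        by_contra hcon2
        push_neg at hcon2
        have hfin : ∀ x : G, {n : ℕ | d (u n) 1 < b ∧ u n = x}.Finite := by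
          intro x; exact hcon2 x
        have hsub : {n : ℕ | d (u n) 1 < b} ⊆
            ⋃ x ∈ {x : G | wordLength S x ≤ ⌊b⌋₊},
              {n : ℕ | d (u n) 1 < b ∧ u n = x} := by
          intro n hn
          simp only [Set.mem_setOf_eq] at hn
          refine Set.mem_biUnion ?_ ⟨hn, rfl⟩
          have : (wordLength S (u n) : ℝ) ≤ b := by
            have := le_trans (hd_fst (u n) 1) hn.le
            rwa [wordDist_one hS] at this
          exact Nat.le_floor this
        exact hbinf (Set.Finite.subset
          (Set.Finite.biUnion (wordLength_ball_finite hS ⌊b⌋₊) (fun x _ => hfin x)) hsub)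
      obtain ⟨x, hx⟩ := hfib
      refine hnb x ?_
      funext y
      refine tendsto_nhds_unique_of_frequently_eq (hu y) tendsto_const_nhds ?_
      rw [Nat.frequently_atTop_iff_infinite]
      exact hx.mono (fun n hn => by simp only [Set.mem_setOf_eq]; rw [hn.2])
    -- constants
    set j : ℕ := ⌈2*B+3⌉₊ with hjdef
    have hj : 2*B+3 ≤ (j:ℝ) := Nat.le_ceil _
    set i : ℕ := ⌈C*(j:ℝ)+B+2⌉₊ with hidef
    have hi : C*(j:ℝ)+B+2 ≤ (i:ℝ) := Nat.le_ceil _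
    set N₂ : ℕ := i + ⌈C*(j:ℝ)⌉₊ with hN2def
    have hN2 : (i:ℝ) + C*(j:ℝ) ≤ (N₂:ℝ) := by
      have := Nat.le_ceil (C*(j:ℝ))
      push_cast [hN2def]
      linarith
    -- eventual bounds
    have EV1 : ∀ᶠ n in Filter.atTop, ∀ z ∈ {z : G | wordLength S z ≤ N₂},
        |bus d (u n) z - h z| ≤ 1 := by
      rw [Set.Finite.eventually_all (wordLength_ball_finite hS N₂)]
      intro z _
      have := Metric.tendsto_nhds.mp (hu z) 1 one_pos
      exact this.mono (fun n hn => by rw [Real.dist_eq] at hn; exact hn.le)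
    have EV2 : ∀ᶠ n in Filter.atTop,
        (M:ℝ)*C*((i:ℝ)+1) + B + 2 ≤ d (u n) 1 :=
      hDtop.eventually_ge_atTop _
    obtain ⟨n, H1, H2⟩ := (EV1.and EV2).exists
    -- notation at the chosen n
    set x : G := u n with hxdef
    set a : ℕ := wordLength S x with hadef
    have haD : (a:ℝ) ≤ d x 1 := by
      have := hd_fst x 1
      rwa [wordDist_one hS] at this
    have hDa : d x 1 ≤ (M:ℝ)*C*(a:ℝ) := by
      have := hd_le x 1
      rwa [wordDist_one hS] at this
    have hDB : B + 2 ≤ d x 1 := by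
      have : (0:ℝ) ≤ (M:ℝ)*C*((i:ℝ)+1) := by positivity
      linarith [H2]
    have hia : i ≤ a := by
      have hMC : (0:ℝ) < (M:ℝ)*C := by positivity
      have h' : (M:ℝ)*C*((i:ℝ)+1) ≤ (M:ℝ)*C*(a:ℝ) := by
        have hb2 : (0:ℝ) ≤ B + 2 := by linarith
        linarith [H2, hDa]
      have : (i:ℝ)+1 ≤ (a:ℝ) := le_of_mul_le_mul_left h' hMC
      exact_mod_cast le_trans (by linarith : (i:ℝ) ≤ (a:ℝ)) le_rfl
    -- geodesic prefix of x at distance i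
    obtain ⟨z₀, hz₀len, hz₀rest⟩ := wordLength_split hS x i hia
    set t : ℕ := wordLength T ((π z₀)⁻¹ * π x) with htdef
    have hrest : (wordLength S (z₀⁻¹ * x) : ℝ) ≤ (a:ℝ) - (i:ℝ) := by
      have := hz₀rest
      have hcast : ((a - i : ℕ) : ℝ) = (a:ℝ) - (i:ℝ) := by
        push_cast [Nat.cast_sub hia]; ring
      calc (wordLength S (z₀⁻¹ * x) : ℝ) ≤ ((a - i : ℕ) : ℝ) := by exact_mod_cast this
        _ = _ := hcast
    -- generic estimate used in both cases: for any `g` with controlled length & image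
    have key : ∀ g : G, (wordLength S g : ℝ) ≤ C*(j:ℝ) →
        wordDist S x (z₀ * g) ≤ d x 1 - (B+2) ∧ wordLength S (z₀ * g) ≤ N₂ := by
      intro g hglen
      constructor
      · rw [wordDist_rev hS]
        have hsplit : (z₀ * g)⁻¹ * x = g⁻¹ * (z₀⁻¹ * x) := by group
        rw [hsplit]
        have hle : wordLength S (g⁻¹ * (z₀⁻¹ * x)) ≤
            wordLength S g⁻¹ + wordLength S (z₀⁻¹ * x) := wordLength_mul_le hS _ _
        rw [wordLength_inv hS] at hle
        have : (wordLength S (g⁻¹ * (z₀⁻¹ * x)) : ℝ) ≤ C*(j:ℝ) + ((a:ℝ) - (i:ℝ)) := by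
          calc (wordLength S (g⁻¹ * (z₀⁻¹ * x)) : ℝ)
              ≤ (wordLength S g : ℝ) + (wordLength S (z₀⁻¹ * x) : ℝ) := by exact_mod_cast hle
            _ ≤ C*(j:ℝ) + ((a:ℝ) - (i:ℝ)) := by linarith
        linarith [haD, hi]
      · have hle : wordLength S (z₀ * g) ≤ wordLength S z₀ + wordLength S g :=
          wordLength_mul_le hS _ _
        have : (wordLength S (z₀ * g) : ℝ) ≤ (N₂:ℝ) := by
          have h1' : (wordLength S z₀ : ℝ) ≤ (i:ℝ) := by exact_mod_cast hz₀len
          calc (wordLength S (z₀ * g) : ℝ)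
              ≤ (wordLength S z₀ : ℝ) + (wordLength S g : ℝ) := by exact_mod_cast hle
            _ ≤ (i:ℝ) + C*(j:ℝ) := by linarith
            _ ≤ (N₂:ℝ) := hN2
        exact_mod_cast this
    rcases lt_or_ge t j with ht | ht
    · -- case t < j : full lift, contradiction with lower bound on h
      obtain ⟨g, hgpi, hglen⟩ := h2 ((π z₀)⁻¹ * π x)
      have hglen' : (wordLength S g : ℝ) ≤ C*(j:ℝ) := by
        have ht' : (t:ℝ) ≤ (j:ℝ) := by exact_mod_cast ht.le
        calc (wordLength S g : ℝ) ≤ C * (t:ℝ) := hglen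
          _ ≤ C*(j:ℝ) := by nlinarith
      obtain ⟨hkey1, hkey2⟩ := key g hglen'
      have hpiz : π (z₀ * g) = π x := by
        rw [map_mul, hgpi]; group
      have hdT : wordDist T (π x) (π (z₀ * g)) = 0 := by
        rw [hpiz, wordDist_self]
      have hbusle : bus d x (z₀ * g) ≤ -(B+2) := by
        have hdefd : d x (z₀ * g) =
            max (wordDist S x (z₀ * g)) ((M:ℝ) * wordDist T (π x) (π (z₀ * g))) := rfl
        have hdxz : d x (z₀ * g) ≤ d x 1 - (B+2) := by
          rw [hdefd, hdT, mul_zero]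
          exact max_le hkey1 (by linarith [hDB])
        have hbd : bus d x (z₀ * g) = d x (z₀ * g) - d x 1 := rfl
        rw [hbd]
        linarith
      have := H1 (z₀ * g) hkey2
      have hlow : h (z₀ * g) ≥ -B := by have := hB (z₀ * g); cases abs_le.mp this; linarith
      rw [abs_le] at this
      linarith [this.1, this.2]
    · -- case j ≤ t : partial lift shows the image retreats, contradiction above
      obtain ⟨w, hwlen, hwrest⟩ := wordLength_split hT ((π z₀)⁻¹ * π x) j (by rw [← htdef]; exact ht)
      obtain ⟨g, hgpi, hglen⟩ := h2 w
      have hglen' : (wordLength S g : ℝ) ≤ C*(j:ℝ) := by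
        have : (wordLength T w : ℝ) ≤ (j:ℝ) := by exact_mod_cast hwlen
        calc (wordLength S g : ℝ) ≤ C * (wordLength T w : ℝ) := hglen
          _ ≤ C*(j:ℝ) := by nlinarith
      obtain ⟨hkey1, hkey2⟩ := key g hglen'
      -- dT bound for z := z₀ * g
      have hdT : wordDist T (π x) (π (z₀ * g)) ≤ (t:ℝ) - (j:ℝ) := by
        rw [wordDist_rev hT]
        have hsplit : (π (z₀ * g))⁻¹ * π x = w⁻¹ * ((π z₀)⁻¹ * π x) := by
          rw [map_mul, hgpi]; group
        rw [hsplit]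
        have hcast : ((t - j : ℕ) : ℝ) = (t:ℝ) - (j:ℝ) := by
          push_cast [Nat.cast_sub ht]; ring
        calc (wordLength T (w⁻¹ * ((π z₀)⁻¹ * π x)) : ℝ)
            ≤ ((t - j : ℕ) : ℝ) := by exact_mod_cast hwrest
          _ = _ := hcast
      -- from EV1 at z₀ * g : the M-part must be large
      have hbz := H1 (z₀ * g) hkey2
      rw [abs_le] at hbz
      have hlow : -(B+1) ≤ bus d x (z₀ * g) := by
        have := hB (z₀ * g)
        rw [abs_le] at this
        linarith [hbz.1, this.1]
      have hmax : max (wordDist S x (z₀ * g)) ((M:ℝ) * wordDist T (π x) (π (z₀ * g)))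
          ≥ d x 1 - (B+1) := by
        have hbd : bus d x (z₀ * g) = d x (z₀ * g) - d x 1 := rfl
        rw [hbd] at hlow
        have hdefd : d x (z₀ * g) =
            max (wordDist S x (z₀ * g)) ((M:ℝ) * wordDist T (π x) (π (z₀ * g))) := rfl
        rw [← hdefd]
        linarith
      have hMt : (M:ℝ) * ((t:ℝ) - (j:ℝ)) ≥ d x 1 - (B+1) := by
        rcases max_cases (wordDist S x (z₀ * g)) ((M:ℝ) * wordDist T (π x) (π (z₀ * g))) with
          ⟨heq, hge⟩ | ⟨heq, hge⟩
        · exfalso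
          rw [heq] at hmax
          linarith [hkey1]
        · rw [heq] at hmax
          have : (M:ℝ) * wordDist T (π x) (π (z₀ * g)) ≤ (M:ℝ) * ((t:ℝ) - (j:ℝ)) := by
            nlinarith [hdT]
          linarith
      -- evaluate bus at z₀ : it is at least M*j - B - 1 ≥ B + 2
      have hdTz₀ : wordDist T (π x) (π z₀) = (t:ℝ) := by
        rw [wordDist_rev hT, htdef]
      have hbusz₀ : bus d x z₀ ≥ B + 2 := by
        have hge : d x z₀ ≥ (M:ℝ) * (t:ℝ) := by
          have := hd_snd x z₀
          rw [hdTz₀] at this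
          linarith
        have hMj : (M:ℝ) * (j:ℝ) ≥ (j:ℝ) := by nlinarith [Nat.cast_nonneg (α := ℝ) j]
        have : bus d x z₀ = d x z₀ - d x 1 := rfl
        rw [this]
        nlinarith [hMt, hj]
      have hz₀ball : z₀ ∈ {z : G | wordLength S z ≤ N₂} := by
        simp only [Set.mem_setOf_eq]
        have : (wordLength S z₀ : ℝ) ≤ (N₂:ℝ) := by
          have h1' : (wordLength S z₀ : ℝ) ≤ (i:ℝ) := by exact_mod_cast hz₀len
          have hCj : (0:ℝ) ≤ C*(j:ℝ) := by positivity
          linarith [hN2]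
        exact_mod_cast this
      have hbz₀ := H1 z₀ hz₀ball
      rw [abs_le] at hbz₀
      have := hB z₀
      rw [abs_le] at this
      linarith [hbz₀.2, this.2]
end

section
/- Let G be a finitely generated infinite group that admits a virtual homomorphism. Then G has an infinite virtually abelian quotient: there exists a normal subgroup N ⊴ G such that G/N is infinite and contains an abelian subgroup of finite index. -/
open Filter Topology

/-- If a finitely generated infinite group admits a virtual
homomorphism, then it has an infinite virtually abelian quotient: there is a
normal subgroup `N ⊴ G` with `G/N` infinite containing an abelian subgroup of
finite index.  (Subgroups of `G/N` correspond to subgroups `H` of `G` containing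
`N`, with matching index; the image of `H` in `G/N` is abelian exactly when all
commutators of elements of `H` lie in `N`.) -/
theorem exists_infinite_virtually_abelian_quotient_of_virtualHom
    {G : Type*} [Group G] [Group.FG G] [Infinite G]
    (hvh : ∃ φ : G → ℤ, IsVirtualHom φ) :
    ∃ N : Subgroup G, N.Normal ∧ Infinite (G ⧸ N) ∧
      ∃ H : Subgroup G, N ≤ H ∧ H.FiniteIndex ∧
        ∀ a b : G, a ∈ H → b ∈ H → a * b * a⁻¹ * b⁻¹ ∈ N := by
  obtain ⟨φ, H, hHfi, hadd, a, haH, haφ⟩ := hvh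
  haveI := hHfi
  set K := H.normalCore with hKdef
  haveI : K.Normal := H.normalCore_normal
  haveI : K.FiniteIndex := H.finiteIndex_normalCore
  have hKH : K ≤ H := H.normalCore_le
  -- φ restricted to K as a monoid hom to Multiplicative ℤ
  let ψ : K →* Multiplicative ℤ :=
    MonoidHom.mk' (fun x => Multiplicative.ofAdd (φ x))
      (fun x y => by
        simp only [Subgroup.coe_mul]
        rw [hadd x y (hKH x.2) (hKH y.2), ofAdd_add])
  have hψ : ∀ x : K, (ψ x).toAdd = φ x := fun x => rfl
  -- the "kernel" subgroup of G
  let L : Subgroup G := ψ.ker.map K.subtype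
  have hLφ : ∀ x ∈ L, φ x = 0 := by
    rintro x ⟨⟨y, hyK⟩, hy, rfl⟩
    have := hψ ⟨y, hyK⟩
    simpa [MonoidHom.mem_ker.mp hy] using this.symm
  set N : Subgroup G := ⁅K, K⁆ with hNdef
  have hNnorm : N.Normal := Subgroup.commutator_normal K K
  have hNK : N ≤ K := Subgroup.commutator_le.mpr fun g hg h hh =>
    K.mul_mem (K.mul_mem (K.mul_mem hg hh) (K.inv_mem hg)) (K.inv_mem hh)
  have hNL : N ≤ L := by
    rw [hNdef, Subgroup.commutator_le]
    intro g hg h hh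
    refine ⟨⟨g, hg⟩ * ⟨h, hh⟩ * ⟨g, hg⟩⁻¹ * ⟨h, hh⟩⁻¹, ?_, rfl⟩
    simp only [SetLike.mem_coe, MonoidHom.mem_ker, map_mul, map_inv]
    rw [mul_comm (ψ ⟨g, hg⟩)]
    group
  -- find b ∈ K with φ b ≠ 0
  obtain ⟨m, hm⟩ : ∃ m : ℕ, m ≠ 0 ∧ a ^ m ∈ K := ⟨K.index, K.index_ne_zero_of_finite, K.pow_index_mem a⟩
  have hbK : a ^ m ∈ K := hm.2
  have hbφ : φ (a ^ m) = m * φ a := by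
    clear hm hbK
    induction m with
    | zero =>
      have h1 : φ 1 = 0 := by
        have := hadd 1 1 H.one_mem H.one_mem
        simpa using this.symm
      simpa using h1
    | succ n ih =>
      rw [pow_succ, hadd _ _ (H.pow_mem haH n) haH, ih]
      push_cast; ring
  have hbφ0 : φ (a ^ m) ≠ 0 := by
    rw [hbφ]
    exact mul_ne_zero (by exact_mod_cast hm.1) haφ
  set b : K := ⟨a ^ m, hbK⟩ with hbdef
  have hinj : Function.Injective (fun n : ℤ => ((a ^ m) ^ n : G ⧸ N)) := by
    intro i j hij
    have : ((a ^ m) ^ i)⁻¹ * (a ^ m) ^ j ∈ N := QuotientGroup.eq.mp (by simpa using hij)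
    have hz : (a ^ m) ^ (j - i) ∈ N := by
      rw [zpow_sub]
      exact hNnorm.mem_comm this
    have h0 : φ ((a ^ m) ^ (j - i)) = 0 := hLφ _ (hNL hz)
    have hc : ((b : G) ^ (j - i)) = (a ^ m) ^ (j - i) := rfl
    have hψb : (ψ (b ^ (j - i))).toAdd = (j - i) * φ (a ^ m) := by
      rw [map_zpow]
      simp [hψ b, hbdef]
      exact Or.inl (hψ _)
    have : (ψ (b ^ (j - i))).toAdd = 0 := by
      rw [hψ]
      rw [show ((b ^ (j - i) : K) : G) = (a ^ m) ^ (j - i) from rfl]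
      exact h0
    rw [hψb] at this
    have := mul_eq_zero.mp this
    rcases this with h | h
    · linarith [sub_eq_zero.mp (by exact_mod_cast h)]
    · exact absurd h hbφ0
  exact ⟨N, hNnorm, Infinite.of_injective _ hinj, K, hNK, ‹K.FiniteIndex›,
    fun x y hx hy => Subgroup.commutator_mem_commutator hx hy⟩
end

section
/- Let F be the free group on a free generating set A with |A| = d ≥ 2. Then for every letter a ∈ A ∪ A⁻¹, every nontrivial element x ∈ F, and every ℓ ∈ ℕ, there exists t ∈ F such that |t⁻¹xt|_A > ℓ, the reduced word of t⁻¹xt does not begin with the letter a, and the reduced word of t⁻¹x⁻¹t does not begin with the letter a. -/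
open Filter Topology

section Aux


variable {α : Type*} [DecidableEq α]

def Rr (p q : α × Bool) : Prop := ¬(p.1 = q.1 ∧ p.2 = !q.2)

lemma my_reduce_eq_self {L : List (α × Bool)} (h : List.Chain' Rr L) :
    FreeGroup.reduce L = L := by
  induction L with
  | nil => rfl
  | cons p L ih =>
    rw [FreeGroup.reduce.cons, ih h.tail]
    cases L with
    | nil => rfl
    | cons q M =>
      simp only
      rw [if_neg (List.isChain_cons_cons.mp h).1]

lemma my_chain'_reduce (L : List (α × Bool)) : List.Chain' Rr (FreeGroup.reduce L) := by
  induction L with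
  | nil => exact List.isChain_nil
  | cons p L ih =>
    rw [FreeGroup.reduce.cons]
    cases h : FreeGroup.reduce L with
    | nil => exact List.isChain_singleton _
    | cons q M =>
      rw [h] at ih
      simp only
      by_cases hc : p.1 = q.1 ∧ p.2 = !q.2
      · rw [if_pos hc]; exact ih.tail
      · rw [if_neg hc]; exact List.isChain_cons_cons.mpr ⟨hc, ih⟩

lemma my_chain'_toWord (x : FreeGroup α) : List.Chain' Rr x.toWord := by
  rw [← FreeGroup.reduce_toWord]; exact my_chain'_reduce _

omit [DecidableEq α] in
lemma my_chain'_replicate (n : ℕ) (s : α × Bool) : List.Chain' Rr (List.replicate n s) := by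
  induction n with
  | zero => exact List.isChain_nil
  | succ n ih =>
    rw [List.replicate_succ]
    cases n with
    | zero => exact List.isChain_singleton _
    | succ m =>
      rw [List.replicate_succ]
      exact List.isChain_cons_cons.mpr ⟨by simp [Rr], by rw [← List.replicate_succ]; exact ih⟩

/-- main helper: conjugating a nontrivial `y` by `mk (replicate n s)` when the
chosen letter avoids cancellation gives an explicitly reduced word. -/
lemma my_conj_toWord (y : FreeGroup α) (hy : y ≠ 1) (n : ℕ) (s : α × Bool)
    (h1 : Rr (s.1, !s.2) (y.toWord.head (fun h => hy (FreeGroup.toWord_eq_nil_iff.mp h))))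
    (h2 : Rr (y.toWord.getLast (fun h => hy (FreeGroup.toWord_eq_nil_iff.mp h))) s) :
    ((FreeGroup.mk (List.replicate n s))⁻¹ * y * FreeGroup.mk (List.replicate n s)).toWord
      = List.replicate n (s.1, !s.2) ++ y.toWord ++ List.replicate n s := by
  have hwne : y.toWord ≠ [] := fun h => hy (FreeGroup.toWord_eq_nil_iff.mp h)
  have hinv : (FreeGroup.mk (List.replicate n s))⁻¹
      = FreeGroup.mk (List.replicate n (s.1, !s.2)) := by
    rw [FreeGroup.inv_mk]
    congr 1
    simp [FreeGroup.invRev]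
  rw [hinv]
  conv_lhs => rw [show y = FreeGroup.mk y.toWord from FreeGroup.mk_toWord.symm]
  rw [FreeGroup.mul_mk, FreeGroup.mul_mk, FreeGroup.toWord_mk]
  apply my_reduce_eq_self
  rw [List.Chain', List.isChain_append, List.isChain_append]
  refine ⟨⟨my_chain'_replicate _ _, my_chain'_toWord _, ?_⟩,
    my_chain'_replicate _ _, ?_⟩
  · intro p hp q hq
    rw [List.getLast?_replicate] at hp
    rw [List.head?_eq_head hwne] at hq
    cases n with
    | zero => simp at hp
    | succ m =>
      simp only [Option.mem_def, Option.some.injEq, if_neg (Nat.succ_ne_zero m)] at hp hq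
      rw [← hp, ← hq]
      exact h1
  · intro p hp q hq
    rw [List.getLast?_append, List.getLast?_eq_getLast hwne] at hp
    rw [List.head?_replicate] at hq
    cases n with
    | zero => simp at hq
    | succ m =>
      simp only [Option.some_or, Option.mem_def, Option.some.injEq,
        if_neg (Nat.succ_ne_zero m)] at hp hq
      rw [← hp, ← hq]
      exact h2


end Aux

/-- In the free group on `A` (`|A| = d ≥ 2`), for every letter
`a ∈ A ∪ A⁻¹`, every nontrivial `x`, and every `ℓ`, there is `t` with
`|t⁻¹xt|_A > ℓ` such that neither the reduced word of `t⁻¹xt` nor that of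
`t⁻¹x⁻¹t` begins with `a`.
(A letter `a ∈ A ∪ A⁻¹` is encoded as a pair `(i, b) : α × Bool`, with
`(i, true)` standing for the generator `of i` and `(i, false)` for its inverse,
matching `FreeGroup.toWord`.) -/
theorem freeGroup_exists_long_conjugate
    {α : Type*} [DecidableEq α] {d : ℕ} (hd : 2 ≤ d) (hcard : Nat.card α = d)
    (i : α) (b : Bool) (x : FreeGroup α) (hx : x ≠ 1) (ℓ : ℕ) :
    ∃ t : FreeGroup α,
      ℓ < (FreeGroup.toWord (t⁻¹ * x * t)).length ∧
      (∀ p ∈ (FreeGroup.toWord (t⁻¹ * x * t)).head?, p ≠ (i, b)) ∧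
      (∀ p ∈ (FreeGroup.toWord (t⁻¹ * x⁻¹ * t)).head?, p ≠ (i, b)) := by
  classical
  have hfin : Finite α := Nat.finite_of_card_ne_zero (by omega)
  have : Fintype α := Fintype.ofFinite α
  have hwne : x.toWord ≠ [] := fun h => hx (FreeGroup.toWord_eq_nil_iff.mp h)
  have hx' : x⁻¹ ≠ 1 := inv_ne_one.mpr hx
  have hwne' : x⁻¹.toWord ≠ [] := fun h => hx' (FreeGroup.toWord_eq_nil_iff.mp h)
  set f := x.toWord.head hwne with hf
  set l := x.toWord.getLast hwne with hl
  -- choose a letter s avoiding three bad values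
  have hcard4 : 4 ≤ Fintype.card (α × Bool) := by
    rw [Fintype.card_prod, Fintype.card_bool]
    have : Fintype.card α = d := by rw [← Nat.card_eq_fintype_card, hcard]
    omega
  obtain ⟨s, hs⟩ : ∃ s : α × Bool,
      s ∉ ({f, (l.1, !l.2), (i, !b)} : Finset (α × Bool)) := by
    have h3 : ({f, (l.1, !l.2), (i, !b)} : Finset (α × Bool)).card ≤ 3 :=
      (Finset.card_insert_le _ _).trans (Nat.succ_le_succ
        ((Finset.card_insert_le _ _).trans (by simp)))
    have : (({f, (l.1, !l.2), (i, !b)} : Finset (α × Bool))ᶜ).Nonempty := by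
      rw [← Finset.card_pos, Finset.card_compl]
      omega
    obtain ⟨s, hs⟩ := this
    exact ⟨s, Finset.mem_compl.mp hs⟩
  simp only [Finset.mem_insert, Finset.mem_singleton, not_or] at hs
  obtain ⟨hs1, hs2, hs3⟩ := hs
  set n := ℓ + 1 with hn
  have cond1 : Rr (s.1, !s.2) f := by
    rintro ⟨h1c, h2c⟩
    exact hs1 (Prod.ext h1c (by simpa using h2c))
  have cond2 : Rr l s := by
    rintro ⟨h1c, h2c⟩
    exact hs2 (Prod.ext h1c.symm (by rw [h2c]; simp))
  have hhead' : x⁻¹.toWord.head hwne' = (l.1, !l.2) := by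
    rw [← Option.some_inj, ← List.head?_eq_head, FreeGroup.toWord_inv, FreeGroup.invRev,
      List.head?_reverse, List.getLast?_map, List.getLast?_eq_getLast hwne]
    rfl
  have hlast' : x⁻¹.toWord.getLast hwne' = (f.1, !f.2) := by
    rw [← Option.some_inj, ← List.getLast?_eq_getLast, FreeGroup.toWord_inv, FreeGroup.invRev,
      List.getLast?_reverse, List.head?_map, List.head?_eq_head hwne]
    rfl
  have cond3 : Rr (s.1, !s.2) (x⁻¹.toWord.head hwne') := by
    rw [hhead']
    rintro ⟨h1c, h2c⟩
    exact hs2 (Prod.ext h1c (by simpa using congrArg (!·) h2c))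
  have cond4 : Rr (x⁻¹.toWord.getLast hwne') s := by
    rw [hlast']
    rintro ⟨h1c, h2c⟩
    exact hs1 (Prod.ext h1c.symm (by simpa using h2c.symm))
  have hsne : (s.1, !s.2) ≠ (i, b) := by
    intro hc
    apply hs3
    rw [Prod.ext_iff] at hc ⊢
    exact ⟨hc.1, by simpa using congrArg (!·) hc.2⟩
  refine ⟨FreeGroup.mk (List.replicate n s), ?_, ?_, ?_⟩
  · rw [my_conj_toWord x hx n s cond1 cond2]
    simp only [List.length_append, List.length_replicate]
    have := List.length_pos_iff.mpr hwne
    omega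
  · rw [my_conj_toWord x hx n s cond1 cond2]
    intro p hp
    simp only [List.append_assoc, List.head?_append, List.head?_replicate, hn,
      if_neg (Nat.succ_ne_zero ℓ), Option.or, Option.mem_def,
      Option.some.injEq] at hp
    rw [← hp]
    exact hsne
  · rw [my_conj_toWord x⁻¹ hx' n s cond3 cond4]
    intro p hp
    simp only [List.append_assoc, List.head?_append, List.head?_replicate, hn,
      if_neg (Nat.succ_ne_zero ℓ), Option.or, Option.mem_def,
      Option.some.injEq] at hp
    rw [← hp]
    exact hsne
end
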